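/- arXiv:2507.06228 — 7 statements merged into one kernel-verified Lean document; each statement's English description precedes it below -/
import Mathlib

section
/- Let η denote the Minkowski bilinear form on ℝ⁴, η(x,y) = −x₀y₀ + x₁y₁ + x₂y₂ + x₃y₃, with matrix η_{μν} = diag(−1,1,1,1). Suppose (u,v,l,n) is a basis of ℝ⁴ satisfying the coframe identity u_μ v_ν + u_ν v_μ + l_μ l_ν + n_μ n_ν = η_{μν} for all μ,ν ∈ {0,1,2,3}, and suppose u₀ ≠ 0. Then there exists a unique w ∈ ℝ⁴ with η(w,u) = 0 and η(w,v) = 0 such that the gauge-transformed tuple (u, v̄, l̄, n̄) := (u, v − ½η(w,w)·u + w, l − η(w,l)·u, n − η(w,n)·u) satisfies l̄₀ = 0 and n̄₀ = 0; this w is given explicitly by w = (l₀·l + n₀·n)/u₀, and the transformed tuple moreover satisfies v̄₀ = −1/(2u₀) and v̄ᵢ = uᵢ/(2u₀²) for i = 1,2,3. -/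
noncomputable section

/-- The Minkowski bilinear form on `ℝ⁴` with signature `(−,+,+,+)`. -/
def eta (x y : Fin 4 → ℝ) : ℝ :=
  -(x 0 * y 0) + x 1 * y 1 + x 2 * y 2 + x 3 * y 3

/-- The matrix `η_{μν} = diag(−1,1,1,1)` of the Minkowski form. -/
def etaMat (μ ν : Fin 4) : ℝ :=
  if μ = ν then (if μ = 0 then -1 else 1) else 0

lemma key_lemma (u v l n : Fin 4 → ℝ)
    (hcof : ∀ μ ν : Fin 4, u μ * v ν + u ν * v μ + l μ * l ν + n μ * n ν = etaMat μ ν)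
    (a : Fin 4 → ℝ) (ν : Fin 4) :
    eta a u * v ν + eta a v * u ν + eta a l * l ν + eta a n * n ν = a ν := by
  have h0 := hcof 0 ν
  have h1 := hcof 1 ν
  have h2 := hcof 2 ν
  have h3 := hcof 3 ν
  fin_cases ν <;>
    simp (config := { decide := true }) only [etaMat, eta, if_true, if_false,
      show ((⟨0, by norm_num⟩ : Fin 4)) = 0 from rfl, show ((⟨1, by norm_num⟩ : Fin 4)) = 1 from rfl,
      show ((⟨2, by norm_num⟩ : Fin 4)) = 2 from rfl, show ((⟨3, by norm_num⟩ : Fin 4)) = 3 from rfl]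
      at h0 h1 h2 h3 ⊢ <;>
    linear_combination (-(a 0)) * h0 + a 1 * h1 + a 2 * h2 + a 3 * h3

lemma coeffs_zero (u v l n : Fin 4 → ℝ)
    (hindep : LinearIndependent ℝ ![u, v, l, n])
    (a b c d : ℝ) (h : ∀ ν, a * u ν + b * v ν + c * l ν + d * n ν = 0) :
    a = 0 ∧ b = 0 ∧ c = 0 ∧ d = 0 := by
  have h2 := Fintype.linearIndependent_iff.mp hindep ![a, b, c, d] ?_
  · exact ⟨h2 0, h2 1, h2 2, h2 3⟩
  · funext ν
    have := h ν
    simp only [Fin.sum_univ_four, Matrix.cons_val_zero, Matrix.cons_val_one, Matrix.head_cons,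
      Matrix.cons_val_two, Matrix.tail_cons, Matrix.cons_val_three, Pi.add_apply, Pi.smul_apply,
      smul_eq_mul, Pi.zero_apply]
    linarith

lemma inner_products (u v l n : Fin 4 → ℝ)
    (hindep : LinearIndependent ℝ ![u, v, l, n])
    (hcof : ∀ μ ν : Fin 4, u μ * v ν + u ν * v μ + l μ * l ν + n μ * n ν = etaMat μ ν) :
    eta u u = 0 ∧ eta u v = 1 ∧ eta u l = 0 ∧ eta u n = 0 ∧
    eta v v = 0 ∧ eta v l = 0 ∧ eta v n = 0 ∧
    eta l l = 1 ∧ eta l n = 0 ∧ eta n n = 1 := by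
  have key := key_lemma u v l n hcof
  have hu := coeffs_zero u v l n hindep (eta u v - 1) (eta u u) (eta u l) (eta u n)
    (fun ν => by have := key u ν; ring_nf; ring_nf at this; linarith)
  have hv := coeffs_zero u v l n hindep (eta v v) (eta v u - 1) (eta v l) (eta v n)
    (fun ν => by have := key v ν; ring_nf; ring_nf at this; linarith)
  have hl := coeffs_zero u v l n hindep (eta l v) (eta l u) (eta l l - 1) (eta l n)
    (fun ν => by have := key l ν; ring_nf; ring_nf at this; linarith)
  have hn := coeffs_zero u v l n hindep (eta n v) (eta n u) (eta n l) (eta n n - 1)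
    (fun ν => by have := key n ν; ring_nf; ring_nf at this; linarith)
  have sym : ∀ x y : Fin 4 → ℝ, eta x y = eta y x := fun x y => by simp only [eta]; ring
  refine ⟨hu.2.1, by linarith [hu.1], hu.2.2.1, hu.2.2.2, hv.1, hv.2.2.1, hv.2.2.2,
    by linarith [hl.2.2.1], hl.2.2.2, by linarith [hn.2.2.2]⟩

/-- Pointwise form of the existence and uniqueness of the adapted representative of a
globally hyperbolic isotropic parallelism. -/
theorem adapted_representative_exists_unique
    (u v l n : Fin 4 → ℝ)
    (hindep : LinearIndependent ℝ ![u, v, l, n])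
    (hspan : Submodule.span ℝ (Set.range ![u, v, l, n]) = ⊤)
    (hcof : ∀ μ ν : Fin 4, u μ * v ν + u ν * v μ + l μ * l ν + n μ * n ν = etaMat μ ν)
    (hu0 : u 0 ≠ 0) :
    (∃! w : Fin 4 → ℝ, eta w u = 0 ∧ eta w v = 0 ∧
        l 0 - eta w l * u 0 = 0 ∧ n 0 - eta w n * u 0 = 0) ∧
    ∀ w vbar : Fin 4 → ℝ,
      w = (fun μ => (l 0 * l μ + n 0 * n μ) / u 0) →
      vbar = (fun μ => v μ - eta w w / 2 * u μ + w μ) →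
      (eta w u = 0 ∧ eta w v = 0 ∧
        l 0 - eta w l * u 0 = 0 ∧ n 0 - eta w n * u 0 = 0 ∧
        vbar 0 = -(1 / (2 * u 0)) ∧
        ∀ i : Fin 4, i ≠ 0 → vbar i = u i / (2 * u 0 ^ 2)) := by
  have key := key_lemma u v l n hcof
  obtain ⟨huu, huv, hul, hun, hvv, hvl, hvn, hll, hln, hnn⟩ := inner_products u v l n hindep hcof
  have sym : ∀ x y : Fin 4 → ℝ, eta x y = eta y x := fun x y => by simp only [eta]; ring
  set w₀ : Fin 4 → ℝ := fun μ => (l 0 * l μ + n 0 * n μ) / u 0 with hw₀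
  have etaw : ∀ y : Fin 4 → ℝ, eta w₀ y = (l 0 * eta l y + n 0 * eta n y) / u 0 := by
    intro y; simp only [hw₀, eta]; field_simp; ring
  have h1 : eta w₀ u = 0 := by
    rw [etaw, sym l u, sym n u, hul, hun]; simp
  have h2 : eta w₀ v = 0 := by
    rw [etaw, sym l v, sym n v, hvl, hvn]; simp
  have hwl : eta w₀ l = l 0 / u 0 := by
    rw [etaw, hll, sym n l, hln]; field_simp; ring
  have hwn : eta w₀ n = n 0 / u 0 := by
    rw [etaw, hln, hnn]; field_simp; ring
  have h3 : l 0 - eta w₀ l * u 0 = 0 := by rw [hwl]; field_simp; ring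
  have h4 : n 0 - eta w₀ n * u 0 = 0 := by rw [hwn]; field_simp; ring
  have hww : eta w₀ w₀ = (l 0 ^ 2 + n 0 ^ 2) / u 0 ^ 2 := by
    rw [etaw, sym l w₀, sym n w₀, hwl, hwn]; field_simp
  have h00 := hcof 0 0
  simp only [etaMat, if_true, if_pos rfl] at h00
  constructor
  · refine ⟨w₀, ⟨h1, h2, h3, h4⟩, ?_⟩
    intro y ⟨g1, g2, g3, g4⟩
    have gyl : eta y l = l 0 / u 0 := by field_simp; linarith
    have gyn : eta y n = n 0 / u 0 := by field_simp; linarith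
    funext ν
    have := key y ν
    rw [g1, g2, gyl, gyn] at this
    simp only [hw₀]
    rw [← this]; field_simp; ring
  · intro w vbar hw hvb
    subst hw hvb
    refine ⟨h1, h2, h3, h4, ?_, ?_⟩
    · show v 0 - eta w₀ w₀ / 2 * u 0 + w₀ 0 = -(1 / (2 * u 0))
      rw [hww]; simp only [hw₀]
      field_simp
      linear_combination h00
    · intro i hi
      show v i - eta w₀ w₀ / 2 * u i + w₀ i = u i / (2 * u 0 ^ 2)
      have h0i := hcof 0 i
      have : etaMat 0 i = 0 := by
        simp only [etaMat]; rw [if_neg (fun h => hi h.symm)]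
      rw [this] at h0i
      rw [hww]; simp only [hw₀]
      field_simp
      linear_combination 2 * u 0 * h0i - u i * h00
end
end

section
/- Let 𝔤 be a 3-dimensional real Lie algebra and let I ⊆ ℝ be an interval containing 0. Suppose: (i) λ : I → ℝ is differentiable and nowhere zero, and t ↦ Θ^t_{ab} is a differentiable family of symmetric real 3×3 matrices satisfying the integrability conditions on I; (ii) e = (e_u, e_l, e_n) is a basis of 𝔤* such that (e, Θ⁰) is a left-invariant parallel Cauchy pair; (iii) U : I → Mat(3×3, ℝ) is differentiable with ∂_t U^t_{ac} = −λ_t Σ_b Θ^t_{ab} U^t_{bc} for all a, c and U⁰ = Id. Define e^t_a := Σ_c U^t_{ac} e_c. Then each e^t is a basis of 𝔤* and the triple {λ_t, e^t, Θ^t} satisfies all four left-invariant parallel spinor flow equations (F1)–(F4) on I. -/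
noncomputable section

variable {𝔤 : Type*} [LieRing 𝔤] [LieAlgebra ℝ 𝔤]

/-- A global left-invariant coframe: a triple of covectors forming a basis of `𝔤*`. -/
def IsCoframe (e : Fin 3 → Module.Dual ℝ 𝔤) : Prop :=
  LinearIndependent ℝ e ∧ Submodule.span ℝ (Set.range e) = ⊤

/-- Equation (F1) of the left-invariant parallel spinor flow at time `t`:
`∂ₜ e^t_a(X) + λ_t Σ_b Θ^t_{ab} e^t_b(X) = 0`. -/
def F1At (lam : ℝ → ℝ) (Θ : ℝ → Matrix (Fin 3) (Fin 3) ℝ)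
    (e : ℝ → Fin 3 → Module.Dual ℝ 𝔤) (t : ℝ) : Prop :=
  ∀ (a : Fin 3) (X : 𝔤),
    HasDerivAt (fun s => e s a X) (-(lam t * ∑ b, Θ t a b * e t b X)) t

/-- Equation (F2) of the left-invariant parallel spinor flow at time `t`:
`−e^t_a([X,Y]) = Σ_b Θ^t_{ab} (e^t_b(X) e^t_u(Y) − e^t_b(Y) e^t_u(X))`. -/
def F2At (Θ : ℝ → Matrix (Fin 3) (Fin 3) ℝ)
    (e : ℝ → Fin 3 → Module.Dual ℝ 𝔤) (t : ℝ) : Prop :=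
  ∀ (a : Fin 3) (X Y : 𝔤),
    -(e t a ⁅X, Y⁆) = ∑ b, Θ t a b * (e t b X * e t 0 Y - e t b Y * e t 0 X)

/-- Equation (F3) of the left-invariant parallel spinor flow at time `t`:
`∂ₜ (Σ_a Θ^t_{ua} e^t_a(X)) = 0`. -/
def F3At (Θ : ℝ → Matrix (Fin 3) (Fin 3) ℝ)
    (e : ℝ → Fin 3 → Module.Dual ℝ 𝔤) (t : ℝ) : Prop :=
  ∀ X : 𝔤, HasDerivAt (fun s => ∑ a, Θ s 0 a * e s a X) 0 t

/-- Equation (F4) of the left-invariant parallel spinor flow at time `t`: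
`Σ_a Θ^t_{ua} e^t_a([X,Y]) = 0`. -/
def F4At (Θ : ℝ → Matrix (Fin 3) (Fin 3) ℝ)
    (e : ℝ → Fin 3 → Module.Dual ℝ 𝔤) (t : ℝ) : Prop :=
  ∀ X Y : 𝔤, ∑ a, Θ t 0 a * e t a ⁅X, Y⁆ = 0

/-- The integrability conditions of the left-invariant parallel spinor flow for the
pair `(λ_t, Θ^t_{ab})` at time `t` (indices `u,l,n` are `0,1,2`). -/
def IntegrabilityAt (lam : ℝ → ℝ) (Θ : ℝ → Matrix (Fin 3) (Fin 3) ℝ) (t : ℝ) : Prop :=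
  deriv (fun s => Θ s 0 0) t
      = lam t * ((Θ t 0 0) ^ 2 + (Θ t 0 1) ^ 2 + (Θ t 0 2) ^ 2) ∧
  deriv (fun s => Θ s 0 1) t = 0 ∧
  deriv (fun s => Θ s 0 2) t = 0 ∧
  deriv (fun s => Θ s 1 1) t = lam t * (Θ t 1 1 * Θ t 0 0 - (Θ t 0 1) ^ 2) ∧
  deriv (fun s => Θ s 1 2) t = lam t * (Θ t 1 2 * Θ t 0 0 - Θ t 0 2 * Θ t 0 1) ∧
  deriv (fun s => Θ s 2 2) t = lam t * (Θ t 2 2 * Θ t 0 0 - (Θ t 0 2) ^ 2) ∧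
  Θ t 1 2 * Θ t 0 1 = Θ t 1 1 * Θ t 0 2 ∧
  Θ t 1 2 * Θ t 0 2 = Θ t 2 2 * Θ t 0 1 ∧
  Θ t 1 1 * Θ t 0 1 + Θ t 1 2 * Θ t 0 2 + Θ t 0 1 * Θ t 0 0 = 0 ∧
  Θ t 1 2 * Θ t 0 1 + Θ t 2 2 * Θ t 0 2 + Θ t 0 2 * Θ t 0 0 = 0

/-- A left-invariant parallel Cauchy pair: a coframe `e` of `𝔤*` together with a symmetric
matrix `Θ` satisfying the constraint `−e_a([X,Y]) = Σ_b Θ_{ab}(e_b(X)e_u(Y) − e_b(Y)e_u(X))`. -/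
def IsCauchyPair (e : Fin 3 → Module.Dual ℝ 𝔤) (Θ : Matrix (Fin 3) (Fin 3) ℝ) : Prop :=
  IsCoframe e ∧ Θ.IsSymm ∧
  ∀ (a : Fin 3) (X Y : 𝔤),
    -(e a ⁅X, Y⁆) = ∑ b, Θ a b * (e b X * e 0 Y - e b Y * e 0 X)

/-- `B_t = ∫₀ᵗ λ_τ dτ`. -/
def Bfun (lam : ℝ → ℝ) (t : ℝ) : ℝ := ∫ τ in (0:ℝ)..t, lam τ

open Set in
lemma ode_zero3 {I : Set ℝ} (hI : I.OrdConnected)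
    (lam : ℝ → ℝ) (Θ : ℝ → Matrix (Fin 3) (Fin 3) ℝ)
    (hlam : ∀ t ∈ I, ContinuousAt lam t)
    (hΘ : ∀ a b : Fin 3, ∀ t ∈ I, ContinuousAt (fun s => Θ s a b) t)
    (f : ℝ → Fin 3 → ℝ)
    (hf : ∀ t ∈ I, HasDerivAt f (fun a => -(lam t * ∑ b, Θ t a b * f t b)) t)
    {t₀ t₁ : ℝ} (h₀ : t₀ ∈ I) (h₁ : t₁ ∈ I) (hz : f t₀ = 0) : f t₁ = 0 := by
  classical
  set J := uIcc t₀ t₁ with hJdef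
  have hJI : J ⊆ I := hI.uIcc_subset h₀ h₁
  set g : ℝ → ℝ := fun s => ∑ a : Fin 3, ∑ b : Fin 3, |lam s * Θ s a b| with hg
  have hgc : ContinuousOn g J := by
    apply continuousOn_of_forall_continuousAt
    intro s hs
    have h1 := hlam s (hJI hs)
    have h2 := fun a b => hΘ a b s (hJI hs)
    simp only [hg, Fin.sum_univ_three]
    exact ((((h1.mul (h2 0 0)).abs.add (h1.mul (h2 0 1)).abs).add
      (h1.mul (h2 0 2)).abs).add
      (((h1.mul (h2 1 0)).abs.add (h1.mul (h2 1 1)).abs).add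
      (h1.mul (h2 1 2)).abs)).add
      (((h1.mul (h2 2 0)).abs.add (h1.mul (h2 2 1)).abs).add
      (h1.mul (h2 2 2)).abs)
  obtain ⟨x₀, hx₀J, hx₀'⟩ := isCompact_uIcc.exists_isMaxOn (nonempty_uIcc) hgc
  have hx₀ : ∀ s ∈ J, g s ≤ g x₀ := fun s hs => hx₀' hs
  set C := g x₀ with hC
  have hC0 : 0 ≤ C := le_trans (by positivity) (hx₀ t₀ left_mem_uIcc)
  set K : NNReal := C.toNNReal with hK
  set v : ℝ → (Fin 3 → ℝ) → (Fin 3 → ℝ) :=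
    fun s x => if s ∈ J then (fun a => -(lam s * ∑ b, Θ s a b * x b)) else 0 with hv
  have hveq : ∀ s ∈ J, ∀ x : Fin 3 → ℝ,
      v s x = fun a => -(lam s * ∑ b, Θ s a b * x b) := by
    intro s hs x; simp only [hv]; rw [if_pos hs]
  have hv0 : ∀ s, v s 0 = 0 := by
    intro s
    by_cases hs : s ∈ J
    · rw [hveq s hs]; funext a; simp
    · simp only [hv]; rw [if_neg hs]
  have hlip : ∀ s, LipschitzWith K (v s) := by
    intro s
    by_cases hs : s ∈ J
    · apply LipschitzWith.of_dist_le_mul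
      intro x y
      rw [dist_pi_le_iff (by positivity)]
      intro a
      have hdiff : v s x a - v s y a = ∑ b, (lam s * Θ s a b) * (y b - x b) := by
        rw [congrFun (hveq s hs x) a, congrFun (hveq s hs y) a]
        simp only [Fin.sum_univ_three]; ring
      rw [Real.dist_eq, hdiff]
      calc |∑ b, (lam s * Θ s a b) * (y b - x b)|
          ≤ ∑ b, |(lam s * Θ s a b) * (y b - x b)| := Finset.abs_sum_le_sum_abs _ _
        _ ≤ ∑ b : Fin 3, |lam s * Θ s a b| * dist x y := by
            apply Finset.sum_le_sum
            intro b _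
            rw [abs_mul]
            exact mul_le_mul_of_nonneg_left
              (by rw [← Real.dist_eq]
                  exact (dist_le_pi_dist y x b).trans (le_of_eq (dist_comm y x))) (abs_nonneg _)
        _ = (∑ b : Fin 3, |lam s * Θ s a b|) * dist x y := by rw [Finset.sum_mul]
        _ ≤ C * dist x y := by
            apply mul_le_mul_of_nonneg_right _ dist_nonneg
            calc (∑ b : Fin 3, |lam s * Θ s a b|)
                ≤ g s := Finset.single_le_sum
                  (f := fun a => ∑ b : Fin 3, |lam s * Θ s a b|)
                  (fun a _ => by positivity) (Finset.mem_univ a)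
              _ ≤ C := hx₀ s hs
        _ = (K : ℝ) * dist x y := by rw [hK, Real.coe_toNNReal _ hC0]
    · simp only [hv, if_neg hs]
      exact LipschitzWith.const' (0 : Fin 3 → ℝ)
  have hfd : ∀ s ∈ J, HasDerivAt f (v s (f s)) s := by
    intro s hs
    rw [hveq s hs]
    exact hf s (hJI hs)
  have hgd : ∀ s, HasDerivAt (fun _ : ℝ => (0 : Fin 3 → ℝ)) (v s 0) s := by
    intro s; rw [hv0 s]; exact hasDerivAt_const _ _
  rcases le_total t₀ t₁ with hle | hle
  · have hIcc : Icc t₀ t₁ = J := (uIcc_of_le hle).symm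
    have := ODE_solution_unique (v := v) (K := K) hlip
      (f := f) (g := fun _ => 0) (a := t₀) (b := t₁)
      (continuousOn_of_forall_continuousAt fun s hs =>
        (hfd s (hIcc ▸ hs)).continuousAt)
      (fun s hs => (hfd s (hIcc ▸ (Ico_subset_Icc_self hs))).hasDerivWithinAt)
      continuousOn_const
      (fun s _ => (hgd s).hasDerivWithinAt)
      (by simpa using hz)
    exact this (right_mem_Icc.mpr hle)
  · have hIcc : Icc t₁ t₀ = J := by rw [hJdef, uIcc_comm]; exact (uIcc_of_le hle).symm
    have := ODE_solution_unique_of_mem_Icc_left (v := v) (K := K) (s := fun _ => univ)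
      (fun s _ => (hlip s).lipschitzOnWith)
      (f := f) (g := fun _ => 0) (a := t₁) (b := t₀)
      (continuousOn_of_forall_continuousAt fun s hs =>
        (hfd s (hIcc ▸ hs)).continuousAt)
      (fun s hs => (hfd s (hIcc ▸ (Ioc_subset_Icc_self hs))).hasDerivWithinAt)
      (fun _ _ => trivial)
      continuousOn_const
      (fun s _ => (hgd s).hasDerivWithinAt)
      (fun _ _ => trivial)
      (by simpa using hz)
    exact this (left_mem_Icc.mpr hle)

/-- If `(λ_t, Θ^t)` is an admissible solution of the integrability conditions (admissible
meaning that `(e, Θ⁰)` is a left-invariant parallel Cauchy pair) and `U` solves the linear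
ODE `∂ₜ U^t_{ac} = −λ_t Σ_b Θ^t_{ab} U^t_{bc}` with `U⁰ = Id`, then `e^t_a := Σ_c U^t_{ac} e_c`
is a family of coframes and `{λ_t, e^t, Θ^t}` is a left-invariant parallel spinor flow. -/
theorem flow_of_admissible_integrability_solution
    {𝔤 : Type*} [LieRing 𝔤] [LieAlgebra ℝ 𝔤]
    (hdim : Module.finrank ℝ 𝔤 = 3)
    (I : Set ℝ) (h0I : (0:ℝ) ∈ I) (hI : I.OrdConnected)
    (lam : ℝ → ℝ) (hlamdiff : ∀ t ∈ I, DifferentiableAt ℝ lam t)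
    (hlam0 : ∀ t ∈ I, lam t ≠ 0)
    (Θ : ℝ → Matrix (Fin 3) (Fin 3) ℝ)
    (hΘsymm : ∀ t, (Θ t).IsSymm)
    (hΘdiff : ∀ a b : Fin 3, ∀ t ∈ I, DifferentiableAt ℝ (fun s => Θ s a b) t)
    (hint : ∀ t ∈ I, IntegrabilityAt lam Θ t)
    (e : Fin 3 → Module.Dual ℝ 𝔤)
    (hCauchy : IsCauchyPair e (Θ 0))
    (U : ℝ → Matrix (Fin 3) (Fin 3) ℝ)
    (hU : ∀ t ∈ I, ∀ a c : Fin 3,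
      HasDerivAt (fun s => U s a c) (-(lam t * ∑ b, Θ t a b * U t b c)) t)
    (hU0 : U 0 = 1) :
    (∀ t ∈ I, IsCoframe (fun a => ∑ c, U t a c • e c)) ∧
    (∀ t ∈ I,
      F1At lam Θ (fun s a => ∑ c, U s a c • e c) t ∧
      F2At Θ (fun s a => ∑ c, U s a c • e c) t ∧
      F3At Θ (fun s a => ∑ c, U s a c • e c) t ∧
      F4At Θ (fun s a => ∑ c, U s a c • e c) t) := by
  classical
  have hsym : ∀ (s : ℝ) (i j : Fin 3), Θ s i j = Θ s j i := fun s i j => (hΘsymm s).apply j i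
  have happ : ∀ (s : ℝ) (a : Fin 3) (Z : 𝔤),
      (∑ c, U s a c • e c) Z = ∑ c, U s a c * e c Z := by
    intro s a Z
    simp
  have hlamc : ∀ t ∈ I, ContinuousAt lam t := fun t ht => (hlamdiff t ht).continuousAt
  have hΘc : ∀ a b : Fin 3, ∀ t ∈ I, ContinuousAt (fun s => Θ s a b) t :=
    fun a b t ht => (hΘdiff a b t ht).continuousAt
  have hE : ∀ t ∈ I, ∀ (b : Fin 3) (w : Fin 3 → ℝ),
      HasDerivAt (fun s => ∑ c, U s b c * w c)
        (-(lam t * ∑ d, Θ t b d * (∑ c, U t d c * w c))) t := by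
    intro t ht b w
    have h := HasDerivAt.fun_sum (u := Finset.univ)
      (fun c _ => ((hU t ht b c).mul_const (w c)))
    refine h.congr_deriv (Eq.symm ?_)
    simp only [Fin.sum_univ_three]
    ring
  have hU0sum : ∀ (a : Fin 3) (w : Fin 3 → ℝ), (∑ c, U 0 a c * w c) = w a := by
    intro a w
    rw [hU0]
    simp [Matrix.one_apply]
  -- injectivity of U t
  have h0 : ∀ t ∈ I, ∀ x : Fin 3 → ℝ, (∀ a, ∑ c, U t a c * x c = 0) → x = 0 := by
    intro t ht x hx
    have hfd : ∀ s ∈ I, HasDerivAt (fun r a => ∑ c, U r a c * x c)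
        (fun a => -(lam s * ∑ b, Θ s a b * ∑ c, U s b c * x c)) s := fun s hs =>
      hasDerivAt_pi.mpr fun a => hE s hs a x
    have hzero := ode_zero3 hI lam Θ hlamc hΘc _ hfd ht h0I (funext hx)
    funext a
    have := congrFun hzero a
    simpa [hU0sum] using this
  have hUunit : ∀ t ∈ I, IsUnit (U t) := by
    intro t ht
    rw [← Matrix.mulVec_injective_iff_isUnit]
    intro x y hxy
    have hsub := h0 t ht (x - y) (fun a => by
      have h1 := congrFun hxy a
      simp only [Matrix.mulVec, dotProduct] at h1
      simp only [Pi.sub_apply, mul_sub, Finset.sum_sub_distrib]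
      rw [h1, sub_self])
    exact sub_eq_zero.mp hsub
  -- coframe
  have hcoframe : ∀ t ∈ I, IsCoframe (fun a => ∑ c, U t a c • e c) := by
    intro t ht
    have hunit := hUunit t ht
    have hdet : IsUnit (U t).det := (Matrix.isUnit_iff_isUnit_det _).mp hunit
    constructor
    · rw [Fintype.linearIndependent_iff]
      intro g hg
      have hg' : ∑ c, (∑ a, g a * U t a c) • e c = 0 := by
        rw [← hg]
        simp only [Finset.smul_sum, smul_smul, Finset.sum_smul]
        rw [Finset.sum_comm]
      have hcoef := (Fintype.linearIndependent_iff.mp hCauchy.1.1) _ hg'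
      have hvm : (U t).vecMul g = (U t).vecMul 0 := by
        funext c
        simp only [Matrix.vecMul, dotProduct]
        rw [hcoef c]
        simp
      have := Matrix.vecMul_injective_iff_isUnit.mpr hunit hvm
      intro a; rw [this]; rfl
    · set V := (U t)⁻¹ with hV
      have hVU : V * U t = 1 := Matrix.nonsing_inv_mul _ hdet
      rw [eq_top_iff, ← hCauchy.1.2, Submodule.span_le]
      rintro φ ⟨b, rfl⟩
      have hb : e b = ∑ a, V b a • ∑ c, U t a c • e c := by
        have h1 : ∑ a, V b a • ∑ c, U t a c • e c = ∑ c, ((V * U t) b c) • e c := by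
          simp only [Finset.smul_sum, smul_smul, Matrix.mul_apply, Finset.sum_smul]
          rw [Finset.sum_comm]
        rw [h1, hVU]
        simp [Matrix.one_apply]
      rw [hb]
      exact Submodule.sum_mem _ fun a _ => Submodule.smul_mem _ _ (Submodule.subset_span ⟨a, rfl⟩)
  -- F2
  have hF2 : ∀ t ∈ I, F2At Θ (fun s a => ∑ c, U s a c • e c) t := by
    intro t ht
    intro a X Y
    have key : ∀ a : Fin 3,
        -(∑ c, U t a c * e c ⁅X, Y⁆)
          - ∑ b, Θ t a b * ((∑ c, U t b c * e c X) * (∑ c, U t 0 c * e c Y)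
              - (∑ c, U t b c * e c Y) * (∑ c, U t 0 c * e c X)) = 0 := by
      have hfd : ∀ s ∈ I, HasDerivAt
          (fun r a => -(∑ c, U r a c * e c ⁅X, Y⁆)
            - ∑ b, Θ r a b * ((∑ c, U r b c * e c X) * (∑ c, U r 0 c * e c Y)
                - (∑ c, U r b c * e c Y) * (∑ c, U r 0 c * e c X)))
          (fun a => -(lam s * ∑ b, Θ s a b *
            (-(∑ c, U s b c * e c ⁅X, Y⁆)
              - ∑ d, Θ s b d * ((∑ c, U s d c * e c X) * (∑ c, U s 0 c * e c Y)
                  - (∑ c, U s d c * e c Y) * (∑ c, U s 0 c * e c X))))) s := by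
        intro s hs
        apply hasDerivAt_pi.mpr
        intro a
        obtain ⟨hd00, hd01, hd02, hd11, hd12, hd22, hc7, hc8, hc9, hc10⟩ := hint s hs
        have hDer : ∀ i j : Fin 3, HasDerivAt (fun r => Θ r i j)
            (deriv (fun r => Θ r i j) s) s := fun i j => (hΘdiff i j s hs).hasDerivAt
        have hbig := ((hE s hs a (fun c => e c ⁅X, Y⁆)).fun_neg).fun_sub
          (HasDerivAt.fun_sum (u := Finset.univ) (fun b _ =>
            (hDer a b).fun_mul (((hE s hs b (fun c => e c X)).fun_mul (hE s hs 0 (fun c => e c Y))).fun_sub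
              ((hE s hs b (fun c => e c Y)).fun_mul (hE s hs 0 (fun c => e c X))))))
        convert hbig using 1
        have hd10 : deriv (fun r => Θ r 1 0) s = 0 := by
          rw [show (fun r => Θ r 1 0) = fun r => Θ r 0 1 from funext fun r => hsym r 1 0]
          exact hd01
        have hd20 : deriv (fun r => Θ r 2 0) s = 0 := by
          rw [show (fun r => Θ r 2 0) = fun r => Θ r 0 2 from funext fun r => hsym r 2 0]
          exact hd02
        have hd21 : deriv (fun r => Θ r 2 1) s = deriv (fun r => Θ r 1 2) s := by
          rw [show (fun r => Θ r 2 1) = fun r => Θ r 1 2 from funext fun r => hsym r 2 1]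
        fin_cases a <;>
          simp only [Fin.isValue, Fin.reduceFinMk, Fin.sum_univ_three, hd00, hd01, hd02,
            hd10, hd20, hd21, hd11, hd12, hd22, hsym s 1 0, hsym s 2 0, hsym s 2 1]
        · ring
        · linear_combination (lam s *
            ((U s 1 0 * e 0 X + U s 1 1 * e 1 X + U s 1 2 * e 2 X) *
              (U s 2 0 * e 0 Y + U s 2 1 * e 1 Y + U s 2 2 * e 2 Y) -
             (U s 1 0 * e 0 Y + U s 1 1 * e 1 Y + U s 1 2 * e 2 Y) *
              (U s 2 0 * e 0 X + U s 2 1 * e 1 X + U s 2 2 * e 2 X))) * hc7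
        · linear_combination (-(lam s *
            ((U s 1 0 * e 0 X + U s 1 1 * e 1 X + U s 1 2 * e 2 X) *
              (U s 2 0 * e 0 Y + U s 2 1 * e 1 Y + U s 2 2 * e 2 Y) -
             (U s 1 0 * e 0 Y + U s 1 1 * e 1 Y + U s 1 2 * e 2 Y) *
              (U s 2 0 * e 0 X + U s 2 1 * e 1 X + U s 2 2 * e 2 X)))) * hc8
      have h00 : (fun a => -(∑ c, U 0 a c * e c ⁅X, Y⁆)
            - ∑ b, Θ 0 a b * ((∑ c, U 0 b c * e c X) * (∑ c, U 0 0 c * e c Y)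
                - (∑ c, U 0 b c * e c Y) * (∑ c, U 0 0 c * e c X))) = 0 := by
        funext a
        simp only [hU0sum]
        have := hCauchy.2.2 a X Y
        simp only [Pi.zero_apply]
        linarith [this]
      have := ode_zero3 hI lam Θ hlamc hΘc _ hfd h0I ht h00
      intro a
      exact congrFun this a
    have := key a
    simp only [happ]
    linarith [this]
  constructor
  · exact hcoframe
  · intro t ht
    refine ⟨?_, hF2 t ht, ?_, ?_⟩
    · -- F1
      intro a X
      have h := hE t ht a (fun c => e c X)
      simp only [happ]
      exact h
    · -- F3
      intro X
      obtain ⟨hd00, hd01, hd02, hd11, hd12, hd22, hc7, hc8, hc9, hc10⟩ := hint t ht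
      have h := HasDerivAt.fun_sum (u := Finset.univ) (fun a _ =>
        ((hΘdiff 0 a t ht).hasDerivAt.fun_mul (hE t ht a (fun c => e c X))))
      simp only [happ]
      refine h.congr_deriv (Eq.symm ?_)
      simp only [Fin.sum_univ_three, hd00, hd01, hd02, hsym t 1 0, hsym t 2 0, hsym t 2 1]
      linear_combination (lam t *
          (U t 1 0 * e 0 X + U t 1 1 * e 1 X + U t 1 2 * e 2 X)) * hc9 +
        (lam t * (U t 2 0 * e 0 X + U t 2 1 * e 1 X + U t 2 2 * e 2 X)) * hc10
    · -- F4
      intro X Y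
      have hf2 := hF2 t ht
      have hAB : ∀ a : Fin 3, ((fun s a => ∑ c, U s a c • e c) t a) ⁅X, Y⁆
          = -(∑ b, Θ t a b * (((∑ c, U t b c • e c) X) * ((∑ c, U t 0 c • e c) Y)
              - ((∑ c, U t b c • e c) Y) * ((∑ c, U t 0 c • e c) X))) := by
        intro a
        have := hf2 a X Y
        simp only at this ⊢
        linarith [this]
      obtain ⟨hd00, hd01, hd02, hd11, hd12, hd22, hc7, hc8, hc9, hc10⟩ := hint t ht
      simp only [hAB, happ]
      simp only [Fin.sum_univ_three, hsym t 1 0, hsym t 2 0, hsym t 2 1]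
      linear_combination (-((U t 1 0 * e 0 X + U t 1 1 * e 1 X + U t 1 2 * e 2 X) *
            (U t 0 0 * e 0 Y + U t 0 1 * e 1 Y + U t 0 2 * e 2 Y) -
          (U t 1 0 * e 0 Y + U t 1 1 * e 1 Y + U t 1 2 * e 2 Y) *
            (U t 0 0 * e 0 X + U t 0 1 * e 1 X + U t 0 2 * e 2 X))) * hc9 +
        (-((U t 2 0 * e 0 X + U t 2 1 * e 1 X + U t 2 2 * e 2 X) *
            (U t 0 0 * e 0 Y + U t 0 1 * e 1 Y + U t 0 2 * e 2 Y) -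
          (U t 2 0 * e 0 Y + U t 2 1 * e 1 Y + U t 2 2 * e 2 Y) *
            (U t 0 0 * e 0 X + U t 0 1 * e 1 X + U t 0 2 * e 2 X))) * hc10
end
end

section
/- Let 𝔤 be a 3-dimensional real Lie algebra and (e, Θ) a left-invariant parallel Cauchy pair with Θ_{ul} = Θ_{un} = 0 (quasi-diagonal) and Θ_{uu} ≠ 0. Let λ : ℝ → ℝ be smooth and nowhere zero, B_t := ∫₀^t λ_τ dτ, and let I be an interval containing 0 on which 1 − Θ_{uu} B_t > 0. Let Q be an orthogonal 2×2 real matrix with (1/Θ_{uu})·[[Θ_{ll}, Θ_{ln}],[Θ_{ln}, Θ_{nn}]] = Q·diag(ρ₊, ρ₋)·Qᵀ for real numbers ρ₊, ρ₋. Define on I: e^t_u := (1 − Θ_{uu} B_t)·e_u and (e^t_l, e^t_n)ᵀ := Q·diag((1 − Θ_{uu} B_t)^{ρ₊}, (1 − Θ_{uu} B_t)^{ρ₋})·Qᵀ·(e_l, e_n)ᵀ, and define the family of symmetric matrices Θ^t by Θ^t_{uu} := Θ_{uu}/(1 − Θ_{uu} B_t), Θ^t_{ij} := Θ_{ij}/(1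 − Θ_{uu} B_t) for i,j ∈ {l,n}, and Θ^t_{ul} = Θ^t_{un} := 0. Then the triple {λ_t, e^t, Θ^t} satisfies the left-invariant parallel spinor flow equations (F1)–(F4) on I, and e⁰ = e. -/
noncomputable section

variable {𝔤 : Type*} [LieRing 𝔤] [LieAlgebra ℝ 𝔤]

/-- Classification of quasi-diagonal left-invariant parallel spinor flows: for a quasi-diagonal
left-invariant parallel Cauchy pair `(e, Θ)` with `Θ_{uu} ≠ 0`, the explicit family of coframes
obtained by diagonalizing `θ/Θ_{uu} = Q diag(ρ₊,ρ₋) Qᵀ`, together with the explicit shape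
operator family, is a left-invariant parallel spinor flow with initial coframe `e`. -/
theorem quasiDiagonal_parallel_spinor_flow
    {𝔤 : Type*} [LieRing 𝔤] [LieAlgebra ℝ 𝔤]
    (hdim : Module.finrank ℝ 𝔤 = 3)
    (e : Fin 3 → Module.Dual ℝ 𝔤) (Θ : Matrix (Fin 3) (Fin 3) ℝ)
    (hCauchy : IsCauchyPair e Θ)
    (hqd1 : Θ 0 1 = 0) (hqd2 : Θ 0 2 = 0) (huu : Θ 0 0 ≠ 0)
    (lam : ℝ → ℝ) (hlam : ContDiff ℝ (⊤ : ℕ∞) lam) (hlam0 : ∀ t, lam t ≠ 0)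
    (I : Set ℝ) (h0I : (0:ℝ) ∈ I) (hI : I.OrdConnected)
    (hpos : ∀ t ∈ I, 0 < 1 - Θ 0 0 * Bfun lam t)
    (Q : Matrix (Fin 2) (Fin 2) ℝ) (hQ : Q * Q.transpose = 1)
    (ρp ρm : ℝ)
    (hdiag : (Θ 0 0)⁻¹ • !![Θ 1 1, Θ 1 2; Θ 1 2, Θ 2 2]
      = Q * Matrix.diagonal ![ρp, ρm] * Q.transpose)
    (M : ℝ → Matrix (Fin 2) (Fin 2) ℝ)
    (hM : ∀ t, M t = Q * Matrix.diagonal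
        ![(1 - Θ 0 0 * Bfun lam t) ^ ρp, (1 - Θ 0 0 * Bfun lam t) ^ ρm] * Q.transpose)
    (eT : ℝ → Fin 3 → Module.Dual ℝ 𝔤)
    (heT0 : ∀ t, eT t 0 = (1 - Θ 0 0 * Bfun lam t) • e 0)
    (heT1 : ∀ t, eT t 1 = M t 0 0 • e 1 + M t 0 1 • e 2)
    (heT2 : ∀ t, eT t 2 = M t 1 0 • e 1 + M t 1 1 • e 2)
    (Θfam : ℝ → Matrix (Fin 3) (Fin 3) ℝ)
    (hΘfam : ∀ t, Θfam t =
      !![Θ 0 0 / (1 - Θ 0 0 * Bfun lam t), 0, 0;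
         0, Θ 1 1 / (1 - Θ 0 0 * Bfun lam t), Θ 1 2 / (1 - Θ 0 0 * Bfun lam t);
         0, Θ 1 2 / (1 - Θ 0 0 * Bfun lam t), Θ 2 2 / (1 - Θ 0 0 * Bfun lam t)]) :
    (∀ t ∈ I, F1At lam Θfam eT t ∧ F2At Θfam eT t ∧ F3At Θfam eT t ∧ F4At Θfam eT t) ∧
    eT 0 = e := by
  obtain ⟨-, hsym, hstr⟩ := hCauchy
  have hΘ10 : Θ 1 0 = 0 := by rw [← hsym.apply 1 0]; exact hqd1
  have hΘ20 : Θ 2 0 = 0 := by rw [← hsym.apply 2 0]; exact hqd2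
  have hΘ21 : Θ 2 1 = Θ 1 2 := (hsym.apply 2 1).symm
  have hlamc : Continuous lam := hlam.continuous
  have hBd : ∀ s : ℝ, HasDerivAt (fun r => Bfun lam r) (lam s) s := fun s =>
    intervalIntegral.integral_hasDerivAt_right (hlamc.intervalIntegrable _ _)
      (hlamc.stronglyMeasurableAtFilter _ _) hlamc.continuousAt
  have hgd : ∀ s : ℝ, HasDerivAt (fun r => 1 - Θ 0 0 * Bfun lam r) (-(Θ 0 0 * lam s)) s :=
    fun s => ((hBd s).const_mul (Θ 0 0)).const_sub 1
  have hgc : Continuous (fun r => 1 - Θ 0 0 * Bfun lam r) :=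
    continuous_iff_continuousAt.mpr fun s => (hgd s).continuousAt
  have hB0 : Bfun lam 0 = 0 := intervalIntegral.integral_same
  have hclosed : ∀ X Y : 𝔤, e 0 ⁅X, Y⁆ = 0 := by
    intro X Y
    have h := hstr 0 X Y
    rw [Fin.sum_univ_three, hqd1, hqd2] at h
    linear_combination -h
  -- orthogonality relations
  have hQ' : Q.transpose * Q = 1 := mul_eq_one_comm.mp hQ
  have r00 : Q 0 0 * Q 0 0 + Q 0 1 * Q 0 1 = 1 := by
    have h := congrFun (congrFun hQ 0) 0
    simp [Matrix.mul_apply, Fin.sum_univ_two, Matrix.one_apply] at h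
    linear_combination h
  have r01 : Q 0 0 * Q 1 0 + Q 0 1 * Q 1 1 = 0 := by
    have h := congrFun (congrFun hQ 0) 1
    simp [Matrix.mul_apply, Fin.sum_univ_two, Matrix.one_apply] at h
    linear_combination h
  have c00 : Q 0 0 * Q 0 0 + Q 1 0 * Q 1 0 = 1 := by
    have h := congrFun (congrFun hQ' 0) 0
    simp [Matrix.mul_apply, Fin.sum_univ_two, Matrix.one_apply] at h
    linear_combination h
  have c01 : Q 0 0 * Q 0 1 + Q 1 0 * Q 1 1 = 0 := by
    have h := congrFun (congrFun hQ' 0) 1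
    simp [Matrix.mul_apply, Fin.sum_univ_two, Matrix.one_apply] at h
    linear_combination h
  have c11 : Q 0 1 * Q 0 1 + Q 1 1 * Q 1 1 = 1 := by
    have h := congrFun (congrFun hQ' 1) 1
    simp [Matrix.mul_apply, Fin.sum_univ_two, Matrix.one_apply] at h
    linear_combination h
  -- diagonalization entries
  have d11 : Θ 1 1 = Θ 0 0 * (Q 0 0 * Q 0 0 * ρp + Q 0 1 * Q 0 1 * ρm) := by
    have h := congrFun (congrFun hdiag 0) 0
    simp [Matrix.smul_apply, Matrix.mul_apply, Matrix.mul_diagonal, Fin.sum_univ_two,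
      smul_eq_mul] at h
    field_simp [huu] at h
    linear_combination h
  have d12 : Θ 1 2 = Θ 0 0 * (Q 0 0 * Q 1 0 * ρp + Q 0 1 * Q 1 1 * ρm) := by
    have h := congrFun (congrFun hdiag 0) 1
    simp [Matrix.smul_apply, Matrix.mul_apply, Matrix.mul_diagonal, Fin.sum_univ_two,
      smul_eq_mul] at h
    field_simp [huu] at h
    linear_combination h
  have d22 : Θ 2 2 = Θ 0 0 * (Q 1 0 * Q 1 0 * ρp + Q 1 1 * Q 1 1 * ρm) := by
    have h := congrFun (congrFun hdiag 1) 1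
    simp [Matrix.smul_apply, Matrix.mul_apply, Matrix.mul_diagonal, Fin.sum_univ_two,
      smul_eq_mul] at h
    field_simp [huu] at h
    linear_combination h
  have k1 : Θ 1 1 * Q 0 0 + Θ 1 2 * Q 1 0 = Θ 0 0 * ρp * Q 0 0 := by
    linear_combination Q 0 0 * d11 + Q 1 0 * d12 + Θ 0 0 * ρp * Q 0 0 * c00
      + Θ 0 0 * ρm * Q 0 1 * c01
  have k2 : Θ 1 1 * Q 0 1 + Θ 1 2 * Q 1 1 = Θ 0 0 * ρm * Q 0 1 := by
    linear_combination Q 0 1 * d11 + Q 1 1 * d12 + Θ 0 0 * ρm * Q 0 1 * c11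
      + Θ 0 0 * ρp * Q 0 0 * c01
  have k3 : Θ 1 2 * Q 0 0 + Θ 2 2 * Q 1 0 = Θ 0 0 * ρp * Q 1 0 := by
    linear_combination Q 0 0 * d12 + Q 1 0 * d22 + Θ 0 0 * ρp * Q 1 0 * c00
      + Θ 0 0 * ρm * Q 1 1 * c01
  have k4 : Θ 1 2 * Q 0 1 + Θ 2 2 * Q 1 1 = Θ 0 0 * ρm * Q 1 1 := by
    linear_combination Q 0 1 * d12 + Q 1 1 * d22 + Θ 0 0 * ρm * Q 1 1 * c11
      + Θ 0 0 * ρp * Q 1 0 * c01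
  -- entries of M
  have hMe : ∀ (s : ℝ) (i j : Fin 2), M s i j
      = Q i 0 * Q j 0 * (1 - Θ 0 0 * Bfun lam s) ^ ρp
        + Q i 1 * Q j 1 * (1 - Θ 0 0 * Bfun lam s) ^ ρm := by
    intro s i j
    rw [hM]
    simp [Matrix.mul_apply, Matrix.mul_diagonal, Fin.sum_univ_two]
    ring
  -- entries of Θfam
  have hT00 : ∀ s : ℝ, Θfam s 0 0 = Θ 0 0 / (1 - Θ 0 0 * Bfun lam s) := by
    intro s; rw [hΘfam]; simp
  have hT01 : ∀ s : ℝ, Θfam s 0 1 = 0 := by intro s; rw [hΘfam]; simp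
  have hT02 : ∀ s : ℝ, Θfam s 0 2 = 0 := by intro s; rw [hΘfam]; simp
  have hT10 : ∀ s : ℝ, Θfam s 1 0 = 0 := by intro s; rw [hΘfam]; simp
  have hT11 : ∀ s : ℝ, Θfam s 1 1 = Θ 1 1 / (1 - Θ 0 0 * Bfun lam s) := by
    intro s; rw [hΘfam]; simp
  have hT12 : ∀ s : ℝ, Θfam s 1 2 = Θ 1 2 / (1 - Θ 0 0 * Bfun lam s) := by
    intro s; rw [hΘfam]; simp
  have hT20 : ∀ s : ℝ, Θfam s 2 0 = 0 := by
    intro s; rw [hΘfam]; simp [Matrix.vecHead, Matrix.vecTail]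
  have hT21 : ∀ s : ℝ, Θfam s 2 1 = Θ 1 2 / (1 - Θ 0 0 * Bfun lam s) := by
    intro s; rw [hΘfam]; simp
  have hT22 : ∀ s : ℝ, Θfam s 2 2 = Θ 2 2 / (1 - Θ 0 0 * Bfun lam s) := by
    intro s; rw [hΘfam]; simp
  constructor
  · intro t ht
    have hgt : 0 < 1 - Θ 0 0 * Bfun lam t := hpos t ht
    have hgne : (1 - Θ 0 0 * Bfun lam t) ≠ 0 := ne_of_gt hgt
    have hinv : (1 - Θ 0 0 * Bfun lam t) * (1 - Θ 0 0 * Bfun lam t)⁻¹ = 1 :=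
      mul_inv_cancel₀ hgne
    have hgpd : HasDerivAt (fun s => (1 - Θ 0 0 * Bfun lam s) ^ ρp)
        (-(Θ 0 0 * lam t) * ρp * (1 - Θ 0 0 * Bfun lam t) ^ (ρp - 1)) t :=
      (hgd t).rpow_const (Or.inl hgne)
    have hgmd : HasDerivAt (fun s => (1 - Θ 0 0 * Bfun lam s) ^ ρm)
        (-(Θ 0 0 * lam t) * ρm * (1 - Θ 0 0 * Bfun lam t) ^ (ρm - 1)) t :=
      (hgd t).rpow_const (Or.inl hgne)
    have hrp : (1 - Θ 0 0 * Bfun lam t) ^ (ρp - 1)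
        = (1 - Θ 0 0 * Bfun lam t) ^ ρp / (1 - Θ 0 0 * Bfun lam t) := by
      rw [Real.rpow_sub hgt, Real.rpow_one]
    have hrm : (1 - Θ 0 0 * Bfun lam t) ^ (ρm - 1)
        = (1 - Θ 0 0 * Bfun lam t) ^ ρm / (1 - Θ 0 0 * Bfun lam t) := by
      rw [Real.rpow_sub hgt, Real.rpow_one]
    have msym : M t 0 1 = M t 1 0 := by rw [hMe, hMe]; ring
    have hcomm : Θ 1 2 * M t 0 0 + Θ 2 2 * M t 0 1 = Θ 1 1 * M t 0 1 + Θ 1 2 * M t 1 1 := by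
      simp only [hMe]
      linear_combination (1 - Θ 0 0 * Bfun lam t) ^ ρp * (Q 0 0 * k3 - Q 1 0 * k1)
        + (1 - Θ 0 0 * Bfun lam t) ^ ρm * (Q 0 1 * k4 - Q 1 1 * k2)
    refine ⟨?_, ?_, ?_, ?_⟩
    · -- F1
      intro a X
      fin_cases a
      · show HasDerivAt (fun s => eT s 0 X) (-(lam t * ∑ b, Θfam t 0 b * eT t b X)) t
        have hfe : (fun s => eT s 0 X) = fun s => (1 - Θ 0 0 * Bfun lam s) * e 0 X := by
          funext s; rw [heT0]; simp
        rw [hfe]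
        convert (hgd t).mul_const (e 0 X) using 1
        case e'_4 => rfl
        case e'_5 => rfl
        rw [Fin.sum_univ_three, hT00, hT01, hT02, heT0]
        simp only [LinearMap.smul_apply, smul_eq_mul, zero_mul, add_zero]
        field_simp
      · show HasDerivAt (fun s => eT s 1 X) (-(lam t * ∑ b, Θfam t 1 b * eT t b X)) t
        have hfe : (fun s => eT s 1 X) = fun s =>
            (Q 0 0 * Q 0 0 * (1 - Θ 0 0 * Bfun lam s) ^ ρp
              + Q 0 1 * Q 0 1 * (1 - Θ 0 0 * Bfun lam s) ^ ρm) * e 1 X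
            + (Q 0 0 * Q 1 0 * (1 - Θ 0 0 * Bfun lam s) ^ ρp
              + Q 0 1 * Q 1 1 * (1 - Θ 0 0 * Bfun lam s) ^ ρm) * e 2 X := by
          funext s; rw [heT1, hMe, hMe]; simp
        rw [hfe]
        convert (((hgpd.const_mul (Q 0 0 * Q 0 0)).add
            (hgmd.const_mul (Q 0 1 * Q 0 1))).mul_const (e 1 X)).add
          (((hgpd.const_mul (Q 0 0 * Q 1 0)).add
            (hgmd.const_mul (Q 0 1 * Q 1 1))).mul_const (e 2 X)) using 1
        case e'_4 => rfl
        case e'_5 => rfl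
        case e'_8 => rfl
        rw [Fin.sum_univ_three, hT10, hT11, hT12, heT0, heT1, heT2,
          hMe, hMe, hMe, hMe, hrp, hrm]
        simp only [LinearMap.add_apply, LinearMap.smul_apply, smul_eq_mul, zero_mul, add_zero,
          zero_add]
        linear_combination (-(lam t / (1 - Θ 0 0 * Bfun lam t)))
          * (e 1 X * ((1 - Θ 0 0 * Bfun lam t) ^ ρp * Q 0 0 * k1
              + (1 - Θ 0 0 * Bfun lam t) ^ ρm * Q 0 1 * k2)
            + e 2 X * ((1 - Θ 0 0 * Bfun lam t) ^ ρp * Q 1 0 * k1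
              + (1 - Θ 0 0 * Bfun lam t) ^ ρm * Q 1 1 * k2))
      · show HasDerivAt (fun s => eT s 2 X) (-(lam t * ∑ b, Θfam t 2 b * eT t b X)) t
        have hfe : (fun s => eT s 2 X) = fun s =>
            (Q 1 0 * Q 0 0 * (1 - Θ 0 0 * Bfun lam s) ^ ρp
              + Q 1 1 * Q 0 1 * (1 - Θ 0 0 * Bfun lam s) ^ ρm) * e 1 X
            + (Q 1 0 * Q 1 0 * (1 - Θ 0 0 * Bfun lam s) ^ ρp
              + Q 1 1 * Q 1 1 * (1 - Θ 0 0 * Bfun lam s) ^ ρm) * e 2 X := by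
          funext s; rw [heT2, hMe, hMe]; simp
        rw [hfe]
        convert (((hgpd.const_mul (Q 1 0 * Q 0 0)).add
            (hgmd.const_mul (Q 1 1 * Q 0 1))).mul_const (e 1 X)).add
          (((hgpd.const_mul (Q 1 0 * Q 1 0)).add
            (hgmd.const_mul (Q 1 1 * Q 1 1))).mul_const (e 2 X)) using 1
        case e'_4 => rfl
        case e'_5 => rfl
        case e'_8 => rfl
        rw [Fin.sum_univ_three, hT20, hT21, hT22, heT0, heT1, heT2,
          hMe, hMe, hMe, hMe, hrp, hrm]
        simp only [LinearMap.add_apply, LinearMap.smul_apply, smul_eq_mul, zero_mul, add_zero,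
          zero_add]
        linear_combination (-(lam t / (1 - Θ 0 0 * Bfun lam t)))
          * (e 1 X * ((1 - Θ 0 0 * Bfun lam t) ^ ρp * Q 0 0 * k3
              + (1 - Θ 0 0 * Bfun lam t) ^ ρm * Q 0 1 * k4)
            + e 2 X * ((1 - Θ 0 0 * Bfun lam t) ^ ρp * Q 1 0 * k3
              + (1 - Θ 0 0 * Bfun lam t) ^ ρm * Q 1 1 * k4))
    · -- F2
      intro a X Y
      have h1 := hstr 1 X Y
      have h2 := hstr 2 X Y
      rw [Fin.sum_univ_three, hΘ10] at h1
      rw [Fin.sum_univ_three, hΘ20, hΘ21] at h2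
      fin_cases a
      · show -(eT t 0 ⁅X, Y⁆)
          = ∑ b, Θfam t 0 b * (eT t b X * eT t 0 Y - eT t b Y * eT t 0 X)
        rw [Fin.sum_univ_three, hT00, hT01, hT02, heT0]
        simp only [LinearMap.smul_apply, smul_eq_mul, zero_mul, add_zero]
        rw [hclosed X Y]
        ring
      · show -(eT t 1 ⁅X, Y⁆)
          = ∑ b, Θfam t 1 b * (eT t b X * eT t 0 Y - eT t b Y * eT t 0 X)
        rw [Fin.sum_univ_three, hT10, hT11, hT12, heT0, heT1, heT2]
        simp only [LinearMap.add_apply, LinearMap.smul_apply, smul_eq_mul, zero_mul, add_zero,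
          zero_add]
        linear_combination M t 0 0 * h1 + M t 0 1 * h2
          + Θ 1 2 * (e 1 X * e 0 Y - e 1 Y * e 0 X) * msym
          + (e 2 X * e 0 Y - e 2 Y * e 0 X) * hcomm
          - (Θ 1 1 * (M t 0 0 * (e 1 X * e 0 Y - e 1 Y * e 0 X)
              + M t 0 1 * (e 2 X * e 0 Y - e 2 Y * e 0 X))
            + Θ 1 2 * (M t 1 0 * (e 1 X * e 0 Y - e 1 Y * e 0 X)
              + M t 1 1 * (e 2 X * e 0 Y - e 2 Y * e 0 X))) * hinv
      · show -(eT t 2 ⁅X, Y⁆)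
          = ∑ b, Θfam t 2 b * (eT t b X * eT t 0 Y - eT t b Y * eT t 0 X)
        rw [Fin.sum_univ_three, hT20, hT21, hT22, heT0, heT1, heT2]
        simp only [LinearMap.add_apply, LinearMap.smul_apply, smul_eq_mul, zero_mul, add_zero,
          zero_add]
        linear_combination M t 1 0 * h1 + M t 1 1 * h2
          - (e 1 X * e 0 Y - e 1 Y * e 0 X) * hcomm
          - ((Θ 1 1 - Θ 2 2) * (e 1 X * e 0 Y - e 1 Y * e 0 X)
            + Θ 1 2 * (e 2 X * e 0 Y - e 2 Y * e 0 X)) * msym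
          - (Θ 1 2 * (M t 0 0 * (e 1 X * e 0 Y - e 1 Y * e 0 X)
              + M t 0 1 * (e 2 X * e 0 Y - e 2 Y * e 0 X))
            + Θ 2 2 * (M t 1 0 * (e 1 X * e 0 Y - e 1 Y * e 0 X)
              + M t 1 1 * (e 2 X * e 0 Y - e 2 Y * e 0 X))) * hinv
    · -- F3
      intro X
      have hev : (fun s => ∑ a, Θfam s 0 a * eT s a X) =ᶠ[nhds t] fun _ => Θ 0 0 * e 0 X := by
        have hnb : ∀ᶠ s in nhds t, 0 < 1 - Θ 0 0 * Bfun lam s := by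
          have h : ContinuousAt (fun r => 1 - Θ 0 0 * Bfun lam r) t := hgc.continuousAt
          exact h.eventually_mem (Ioi_mem_nhds hgt) |>.mono fun s hs => hs
        filter_upwards [hnb] with s hs
        rw [Fin.sum_univ_three, hT00, hT01, hT02, heT0]
        simp only [LinearMap.smul_apply, smul_eq_mul, zero_mul, add_zero]
        field_simp
      exact (hasDerivAt_const t (Θ 0 0 * e 0 X)).congr_of_eventuallyEq hev
    · -- F4
      intro X Y
      rw [Fin.sum_univ_three, hT00, hT01, hT02, heT0]
      simp [hclosed X Y]
  · -- initial condition
    funext a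
    have hg0 : (1:ℝ) - Θ 0 0 * Bfun lam 0 = 1 := by rw [hB0]; ring
    fin_cases a
    · show eT 0 0 = e 0
      rw [heT0, hg0, one_smul]
    · show eT 0 1 = e 1
      rw [heT1, hMe, hMe, hg0]
      simp only [Real.one_rpow, mul_one]
      rw [r00, r01]
      simp
    · show eT 0 2 = e 2
      rw [heT2, hMe, hMe, hg0]
      simp only [Real.one_rpow, mul_one]
      have r10 : Q 1 0 * Q 0 0 + Q 1 1 * Q 0 1 = 0 := by linear_combination r01
      have r11 : Q 1 0 * Q 1 0 + Q 1 1 * Q 1 1 = 1 := by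
        have h := congrFun (congrFun hQ 1) 1
        simp [Matrix.mul_apply, Fin.sum_univ_two, Matrix.one_apply] at h
        linear_combination h
      rw [r10, r11]
      simp
end
end

section
/- Let 𝔤 be a 3-dimensional real Lie algebra and (e, Θ) a left-invariant parallel Cauchy pair, let λ : ℝ → ℝ be smooth and nowhere zero, B_t := ∫₀^t λ_τ dτ. Case (i): suppose Θ_{ul} = 0, Θ_{un} ≠ 0, Θ_{ll} = Θ_{ln} = 0 and Θ_{nn} = −Θ_{uu}; set λ := |Θ_{un}|, y_t := λ·B_t + arctan(Θ_{uu}/λ), and let I be an interval containing 0 on which cos(y_t) ≠ 0. Define on I: e^t_u := (1 − Θ_{uu} B_t)·e_u − Θ_{un} B_t·e_n, e^t_l := e_l, e^t_n := (Θ_{uu}/Θ_{un} − (λ/Θ_{un})(1 − Θ_{uu} B_t)·tan(y_t))·e_u + (1 + λ B_t·tan(y_t))·e_n, and the symmetric family Θ^t with Θ^t_{uu} := λ·tan(y_t), Θ^t_{nn} := −λ·tan(y_t), Θ^t_{un} := Θ_{un}, and all other entries zero. Then {λ_t, e^t, Θ^t} satisfies the left-invariant parallel spinor flow equations (F1)–(F4)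 on I with e⁰ = e. Case (ii): the analogous statement holds exchanging the roles of l and n, i.e. if Θ_{un} = 0, Θ_{ul} ≠ 0, Θ_{nn} = Θ_{ln} = 0, Θ_{ll} = −Θ_{uu}, with λ := |Θ_{ul}|, then e^t_u := (1 − Θ_{uu} B_t)·e_u − Θ_{ul} B_t·e_l, e^t_n := e_n, e^t_l := (Θ_{uu}/Θ_{ul} − (λ/Θ_{ul})(1 − Θ_{uu} B_t)·tan(y_t))·e_u + (1 + λ B_t·tan(y_t))·e_l, together with Θ^t_{uu} = −Θ^t_{ll} = λ·tan(y_t), Θ^t_{ul} = Θ_{ul} and other entries zero, satisfies (F1)–(F4) on I with e⁰ = e. -/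
noncomputable section

variable {𝔤 : Type*} [LieRing 𝔤] [LieAlgebra ℝ 𝔤]

lemma flow_aux
    {𝔤 : Type*} [LieRing 𝔤] [LieAlgebra ℝ 𝔤]
    (a c : ℝ) (hc : c ≠ 0)
    (lam : ℝ → ℝ) (hlamc : Continuous lam)
    (y : ℝ → ℝ) (hy : ∀ t, y t = |c| * Bfun lam t + Real.arctan (a / |c|))
    (e : Fin 3 → Module.Dual ℝ 𝔤) (p q : Fin 3)
    (hcases : ∀ b : Fin 3, b = 0 ∨ b = p ∨ b = q)
    (hsum : ∀ F : Fin 3 → ℝ, ∑ b, F b = F 0 + F p + F q)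
    (hbr0 : ∀ X Y : 𝔤, e 0 ⁅X, Y⁆ = -(c * (e q X * e 0 Y - e q Y * e 0 X)))
    (hbrp : ∀ X Y : 𝔤, e p ⁅X, Y⁆ = 0)
    (hbrq : ∀ X Y : 𝔤, e q ⁅X, Y⁆ = a * (e q X * e 0 Y - e q Y * e 0 X))
    (eT : ℝ → Fin 3 → Module.Dual ℝ 𝔤)
    (heT0 : ∀ t, eT t 0 = (1 - a * Bfun lam t) • e 0 - (c * Bfun lam t) • e q)
    (heTp : ∀ t, eT t p = e p)
    (heTq : ∀ t, eT t q = (a / c - |c| / c * (1 - a * Bfun lam t) * Real.tan (y t)) • e 0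
        + (1 + |c| * Bfun lam t * Real.tan (y t)) • e q)
    (Θfam : ℝ → Matrix (Fin 3) (Fin 3) ℝ)
    (hΘ00 : ∀ t, Θfam t 0 0 = |c| * Real.tan (y t))
    (hΘ0p : ∀ t, Θfam t 0 p = 0) (hΘ0q : ∀ t, Θfam t 0 q = c)
    (hΘp0 : ∀ t, Θfam t p 0 = 0) (hΘpp : ∀ t, Θfam t p p = 0) (hΘpq : ∀ t, Θfam t p q = 0)
    (hΘq0 : ∀ t, Θfam t q 0 = c) (hΘqp : ∀ t, Θfam t q p = 0)
    (hΘqq : ∀ t, Θfam t q q = -(|c| * Real.tan (y t))) :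
    (∀ t : ℝ, Real.cos (y t) ≠ 0 →
      F1At lam Θfam eT t ∧ F2At Θfam eT t ∧ F3At Θfam eT t ∧ F4At Θfam eT t) ∧ eT 0 = e := by
  have habs0 : |c| ≠ 0 := abs_ne_zero.mpr hc
  have habs : |c| = c ∨ |c| = -c := abs_choice c
  have hBd : ∀ t, HasDerivAt (Bfun lam) (lam t) t := fun t =>
    (hlamc.integral_hasStrictDerivAt 0 t).hasDerivAt
  have hB0 : Bfun lam 0 = 0 := intervalIntegral.integral_same
  have hyd : ∀ t, HasDerivAt y (|c| * lam t) t := by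
    have hyf : y = fun s => |c| * Bfun lam s + Real.arctan (a / |c|) := funext hy
    intro t; rw [hyf]; exact ((hBd t).const_mul _).add_const _
  have heT0X : ∀ t (X : 𝔤), eT t 0 X
      = (1 - a * Bfun lam t) * e 0 X - (c * Bfun lam t) * e q X := by
    intro t X; rw [heT0 t]; simp [smul_eq_mul]
  have heTpX : ∀ t (X : 𝔤), eT t p X = e p X := fun t X => by rw [heTp t]
  have heTqX : ∀ t (X : 𝔤), eT t q X
      = (a / c - |c| / c * (1 - a * Bfun lam t) * Real.tan (y t)) * e 0 X
        + (1 + |c| * Bfun lam t * Real.tan (y t)) * e q X := by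
    intro t X; rw [heTq t]; simp [smul_eq_mul]
  constructor
  · intro t hcos
    have htd : HasDerivAt (fun s => Real.tan (y s))
        ((1 + Real.tan (y t) ^ 2) * (|c| * lam t)) t := by
      have h1 : HasDerivAt (fun s => Real.tan (y s))
          (1 / Real.cos (y t) ^ 2 * (|c| * lam t)) t :=
        (Real.hasDerivAt_tan hcos).comp t (hyd t)
      have h2 : 1 / Real.cos (y t) ^ 2 = 1 + Real.tan (y t) ^ 2 := by
        rw [← Real.inv_one_add_tan_sq hcos, one_div, inv_inv]
      rwa [h2] at h1
    refine ⟨?_, ?_, ?_, ?_⟩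
    · -- F1
      intro b X
      rcases hcases b with h | h | h <;> rw [h]
      · have hfun : (fun s => eT s 0 X)
            = fun s => (1 - a * Bfun lam s) * e 0 X - c * Bfun lam s * e q X :=
          funext fun s => heT0X s X
        rw [hfun]
        have hd : HasDerivAt
            (fun s => (1 - a * Bfun lam s) * e 0 X - c * Bfun lam s * e q X)
            (-(a * lam t) * e 0 X - c * lam t * e q X) t :=
          ((((hBd t).const_mul a).const_sub 1).mul_const (e 0 X)).sub
            (((hBd t).const_mul c).mul_const (e q X))
        convert hd using 1
        rw [hsum, hΘ00, hΘ0p, hΘ0q, heT0X, heTqX, heTpX]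
        rcases habs with h' | h' <;> rw [h'] <;> field_simp <;> ring
      · have hfun : (fun s => eT s p X) = fun _ => e p X := funext fun s => heTpX s X
        rw [hfun]
        refine (hasDerivAt_const t (e p X)).congr_deriv ?_
        rw [hsum, hΘp0, hΘpp, hΘpq]; ring
      · have hfun : (fun s => eT s q X)
            = fun s => (a / c - |c| / c * ((1 - a * Bfun lam s) * Real.tan (y s))) * e 0 X
              + (1 + |c| * Bfun lam s * Real.tan (y s)) * e q X := by
          funext s; rw [heTqX s X]; ring
        rw [hfun]
        have hd := (((((((hBd t).const_mul a).const_sub 1).mul htd).const_mul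
            (|c| / c)).const_sub (a / c)).mul_const (e 0 X)).add
          (((((hBd t).const_mul (|c|)).mul htd).const_add 1).mul_const (e q X))
        refine hd.congr_deriv ?_
        rw [hsum, hΘq0, hΘqp, hΘqq, heT0X, heTqX, heTpX]
        rcases habs with h' | h' <;> rw [h'] <;> field_simp <;> ring
    · -- F2
      intro b X Y
      rcases hcases b with h | h | h <;>
        · rw [h, hsum]
          simp only [hΘ00, hΘ0p, hΘ0q, hΘp0, hΘpp, hΘpq, hΘq0, hΘqp, hΘqq,
            heT0X, heTpX, heTqX, hbr0, hbrp, hbrq]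
          rcases habs with h | h <;> rw [h] <;> field_simp <;> ring
    · -- F3
      intro X
      have hfun : (fun s => ∑ b, Θfam s 0 b * eT s b X)
          = fun _ => a * e 0 X + c * e q X := by
        funext s
        rw [hsum]
        simp only [hΘ00, hΘ0p, hΘ0q, heT0X, heTqX]
        field_simp
        ring
      rw [hfun]
      exact hasDerivAt_const _ _
    · -- F4
      intro X Y
      rw [hsum]
      simp only [hΘ00, hΘ0p, hΘ0q, heT0X, heTpX, heTqX, hbr0, hbrp, hbrq]
      field_simp
      ring
  · -- initial condition
    funext b
    rcases hcases b with h | h | h <;> rw [h]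
    · rw [heT0 0, hB0]; simp
    · exact heTp 0
    · have hy0 : y 0 = Real.arctan (a / |c|) := by rw [hy 0, hB0]; ring
      rw [heTq 0, hB0, hy0, Real.tan_arctan]
      have h1 : a / c - |c| / c * (1 - a * 0) * (a / |c|) = 0 := by field_simp; ring
      have h2 : 1 + |c| * 0 * (a / |c|) = 1 := by ring
      rw [h1, h2, zero_smul, one_smul, zero_add]
/-- Classification of left-invariant parallel spinor flows with `Θ_{ul}Θ_{un} = 0` but
`Θ_{ul}² + Θ_{un}² ≠ 0`: in each of the two cases the explicit trigonometric family of
coframes and shape operators is a left-invariant parallel spinor flow with initial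
coframe `e`. -/
theorem offDiagonal_parallel_spinor_flow
    {𝔤 : Type*} [LieRing 𝔤] [LieAlgebra ℝ 𝔤]
    (hdim : Module.finrank ℝ 𝔤 = 3)
    (e : Fin 3 → Module.Dual ℝ 𝔤) (Θ : Matrix (Fin 3) (Fin 3) ℝ)
    (hCauchy : IsCauchyPair e Θ)
    (lam : ℝ → ℝ) (hlam : ContDiff ℝ (⊤ : ℕ∞) lam) (hlam0 : ∀ t, lam t ≠ 0) :
    -- Case (i): Θ_{ul} = 0, Θ_{un} ≠ 0
    ((Θ 0 1 = 0 ∧ Θ 0 2 ≠ 0 ∧ Θ 1 1 = 0 ∧ Θ 1 2 = 0 ∧ Θ 2 2 = -Θ 0 0) →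
      ∀ (y : ℝ → ℝ),
        (∀ t, y t = |Θ 0 2| * Bfun lam t + Real.arctan (Θ 0 0 / |Θ 0 2|)) →
      ∀ (I : Set ℝ), (0:ℝ) ∈ I → I.OrdConnected →
        (∀ t ∈ I, Real.cos (y t) ≠ 0) →
      ∀ (eT : ℝ → Fin 3 → Module.Dual ℝ 𝔤),
        (∀ t, eT t 0 = (1 - Θ 0 0 * Bfun lam t) • e 0 - (Θ 0 2 * Bfun lam t) • e 2) →
        (∀ t, eT t 1 = e 1) →
        (∀ t, eT t 2 =
          (Θ 0 0 / Θ 0 2 - |Θ 0 2| / Θ 0 2 * (1 - Θ 0 0 * Bfun lam t) * Real.tan (y t)) • e 0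
          + (1 + |Θ 0 2| * Bfun lam t * Real.tan (y t)) • e 2) →
      ∀ (Θfam : ℝ → Matrix (Fin 3) (Fin 3) ℝ),
        (∀ t, Θfam t = !![|Θ 0 2| * Real.tan (y t), 0, Θ 0 2;
                          0, 0, 0;
                          Θ 0 2, 0, -(|Θ 0 2| * Real.tan (y t))]) →
      (∀ t ∈ I, F1At lam Θfam eT t ∧ F2At Θfam eT t ∧ F3At Θfam eT t ∧ F4At Θfam eT t) ∧
        eT 0 = e) ∧
    -- Case (ii): Θ_{un} = 0, Θ_{ul} ≠ 0
    ((Θ 0 2 = 0 ∧ Θ 0 1 ≠ 0 ∧ Θ 2 2 = 0 ∧ Θ 1 2 = 0 ∧ Θ 1 1 = -Θ 0 0) →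
      ∀ (y : ℝ → ℝ),
        (∀ t, y t = |Θ 0 1| * Bfun lam t + Real.arctan (Θ 0 0 / |Θ 0 1|)) →
      ∀ (I : Set ℝ), (0:ℝ) ∈ I → I.OrdConnected →
        (∀ t ∈ I, Real.cos (y t) ≠ 0) →
      ∀ (eT : ℝ → Fin 3 → Module.Dual ℝ 𝔤),
        (∀ t, eT t 0 = (1 - Θ 0 0 * Bfun lam t) • e 0 - (Θ 0 1 * Bfun lam t) • e 1) →
        (∀ t, eT t 2 = e 2) →
        (∀ t, eT t 1 =
          (Θ 0 0 / Θ 0 1 - |Θ 0 1| / Θ 0 1 * (1 - Θ 0 0 * Bfun lam t) * Real.tan (y t)) • e 0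
          + (1 + |Θ 0 1| * Bfun lam t * Real.tan (y t)) • e 1) →
      ∀ (Θfam : ℝ → Matrix (Fin 3) (Fin 3) ℝ),
        (∀ t, Θfam t = !![|Θ 0 1| * Real.tan (y t), Θ 0 1, 0;
                          Θ 0 1, -(|Θ 0 1| * Real.tan (y t)), 0;
                          0, 0, 0]) →
      (∀ t ∈ I, F1At lam Θfam eT t ∧ F2At Θfam eT t ∧ F3At Θfam eT t ∧ F4At Θfam eT t) ∧
        eT 0 = e) := by
  obtain ⟨-, hsymm, hC⟩ := hCauchy
  constructor
  · rintro ⟨h01, h02, h11, h12, h22⟩ y hy I hI0 - hcosI eT heT0 heT1 heT2 Θfam hΘfam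
    have h10 : Θ 1 0 = 0 := (hsymm.apply 1 0).symm.trans h01
    have h21 : Θ 2 1 = 0 := (hsymm.apply 2 1).symm.trans h12
    have hbr0 : ∀ X Y : 𝔤, e 0 ⁅X, Y⁆
        = -(Θ 0 2 * (e 2 X * e 0 Y - e 2 Y * e 0 X)) := by
      intro X Y
      have h := hC 0 X Y
      rw [Fin.sum_univ_three, h01] at h
      linear_combination -h
    have hbrp : ∀ X Y : 𝔤, e 1 ⁅X, Y⁆ = 0 := by
      intro X Y
      have h := hC 1 X Y
      rw [Fin.sum_univ_three, h10, h11, h12] at h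
      linear_combination -h
    have hbrq : ∀ X Y : 𝔤, e 2 ⁅X, Y⁆
        = Θ 0 0 * (e 2 X * e 0 Y - e 2 Y * e 0 X) := by
      intro X Y
      have h := hC 2 X Y
      rw [Fin.sum_univ_three, h21, h22] at h
      linear_combination -h
    obtain ⟨hmain, h0⟩ := flow_aux (Θ 0 0) (Θ 0 2) h02 lam hlam.continuous y hy e 1 2
      (by decide) (fun F => Fin.sum_univ_three F) hbr0 hbrp hbrq
      eT heT0 heT1 heT2 Θfam
      (fun t => by rw [hΘfam t]; simp [Matrix.vecHead, Matrix.vecTail])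
      (fun t => by rw [hΘfam t]; simp [Matrix.vecHead, Matrix.vecTail])
      (fun t => by rw [hΘfam t]; simp [Matrix.vecHead, Matrix.vecTail])
      (fun t => by rw [hΘfam t]; simp [Matrix.vecHead, Matrix.vecTail])
      (fun t => by rw [hΘfam t]; simp [Matrix.vecHead, Matrix.vecTail])
      (fun t => by rw [hΘfam t]; simp [Matrix.vecHead, Matrix.vecTail])
      (fun t => by rw [hΘfam t]; simp [Matrix.vecHead, Matrix.vecTail])
      (fun t => by rw [hΘfam t]; simp [Matrix.vecHead, Matrix.vecTail])
      (fun t => by rw [hΘfam t]; simp [Matrix.vecHead, Matrix.vecTail])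
    exact ⟨fun t ht => hmain t (hcosI t ht), h0⟩
  · rintro ⟨h02, h01, h22, h12, h11⟩ y hy I hI0 - hcosI eT heT0 heT2 heT1 Θfam hΘfam
    have h20 : Θ 2 0 = 0 := (hsymm.apply 2 0).symm.trans h02
    have h21 : Θ 2 1 = 0 := (hsymm.apply 2 1).symm.trans h12
    have hbr0 : ∀ X Y : 𝔤, e 0 ⁅X, Y⁆
        = -(Θ 0 1 * (e 1 X * e 0 Y - e 1 Y * e 0 X)) := by
      intro X Y
      have h := hC 0 X Y
      rw [Fin.sum_univ_three, h02] at h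
      linear_combination -h
    have hbrp : ∀ X Y : 𝔤, e 2 ⁅X, Y⁆ = 0 := by
      intro X Y
      have h := hC 2 X Y
      rw [Fin.sum_univ_three, h20, h21, h22] at h
      linear_combination -h
    have hbrq : ∀ X Y : 𝔤, e 1 ⁅X, Y⁆
        = Θ 0 0 * (e 1 X * e 0 Y - e 1 Y * e 0 X) := by
      intro X Y
      have h := hC 1 X Y
      rw [Fin.sum_univ_three, h12, h11] at h
      linear_combination -h
    obtain ⟨hmain, h0⟩ := flow_aux (Θ 0 0) (Θ 0 1) h01 lam hlam.continuous y hy e 2 1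
      (by decide) (fun F => by rw [Fin.sum_univ_three]; ring) hbr0 hbrp hbrq
      eT heT0 heT2 heT1 Θfam
      (fun t => by rw [hΘfam t]; simp [Matrix.vecHead, Matrix.vecTail])
      (fun t => by rw [hΘfam t]; simp [Matrix.vecHead, Matrix.vecTail])
      (fun t => by rw [hΘfam t]; simp [Matrix.vecHead, Matrix.vecTail])
      (fun t => by rw [hΘfam t]; simp [Matrix.vecHead, Matrix.vecTail])
      (fun t => by rw [hΘfam t]; simp [Matrix.vecHead, Matrix.vecTail])
      (fun t => by rw [hΘfam t]; simp [Matrix.vecHead, Matrix.vecTail])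
      (fun t => by rw [hΘfam t]; simp [Matrix.vecHead, Matrix.vecTail])
      (fun t => by rw [hΘfam t]; simp [Matrix.vecHead, Matrix.vecTail])
      (fun t => by rw [hΘfam t]; simp [Matrix.vecHead, Matrix.vecTail])
    exact ⟨fun t ht => hmain t (hcosI t ht), h0⟩
end
end

section
/- Let 𝔤 be a 3-dimensional real Lie algebra and (e, Θ) a left-invariant parallel Cauchy pair with Θ_{ul}·Θ_{un} ≠ 0, satisfying Θ_{ll} = (Θ_{ul}/Θ_{un})·Θ_{ln}, Θ_{nn} = (Θ_{un}/Θ_{ul})·Θ_{ln} and Θ_{ln} = −(Θ_{ul}Θ_{un}/(Θ_{ul}² + Θ_{un}²))·Θ_{uu} (so that T := Θ_{ll} + Θ_{nn} = −Θ_{uu}). Let λ : ℝ → ℝ be smooth and nowhere zero, B_t := ∫₀^t λ_τ dτ, λ := √(Θ_{ul}² + Θ_{un}²), y_t := λ·B_t + arctan(Θ_{uu}/λ), and let I be an interval containing 0 on which cos(y_t) ≠ 0. Define on I: e^t_u := e_u + B_t·(T·e_u − Θ_{ul}·e_l − Θ_{un}·e_n); e^t_l := −(Θ_{ul}/λ)·(T/λ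 + (1 + T B_t)·tan(y_t))·e_u + (1 + (Θ_{ul}² B_t/λ)·tan(y_t))·e_l + (Θ_{ul}Θ_{un} B_t/λ)·tan(y_t)·e_n; e^t_n := −(Θ_{un}/λ)·(T/λ + (1 + T B_t)·tan(y_t))·e_u + (Θ_{ul}Θ_{un} B_t/λ)·tan(y_t)·e_l + (1 + (Θ_{un}² B_t/λ)·tan(y_t))·e_n; and the symmetric family Θ^t with Θ^t_{uu} := λ·tan(y_t), Θ^t_{ul} := Θ_{ul}, Θ^t_{un} := Θ_{un}, Θ^t_{ll} := −(Θ_{ul}²/λ)·tan(y_t), Θ^t_{nn} := −(Θ_{un}²/λ)·tan(y_t), Θ^t_{ln} := −(Θ_{ul}Θ_{un}/λ)·tan(y_t). Then {λ_t, e^t, Θ^t} satisfies the left-invariant parallel spinor flow equations (F1)–(F4) on I with e⁰ = e. -/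
noncomputable section

variable {𝔤 : Type*} [LieRing 𝔤] [LieAlgebra ℝ 𝔤]

/-- Classification of left-invariant parallel spinor flows with `Θ_{ul}Θ_{un} ≠ 0`: the
explicit trigonometric family of coframes and shape operators is a left-invariant parallel
spinor flow with initial coframe `e`. -/
theorem generic_parallel_spinor_flow
    {𝔤 : Type*} [LieRing 𝔤] [LieAlgebra ℝ 𝔤]
    (hdim : Module.finrank ℝ 𝔤 = 3)
    (e : Fin 3 → Module.Dual ℝ 𝔤) (Θ : Matrix (Fin 3) (Fin 3) ℝ)
    (hCauchy : IsCauchyPair e Θ)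
    (hgen : Θ 0 1 * Θ 0 2 ≠ 0)
    (hll : Θ 1 1 = Θ 0 1 / Θ 0 2 * Θ 1 2)
    (hnn : Θ 2 2 = Θ 0 2 / Θ 0 1 * Θ 1 2)
    (hln : Θ 1 2 = -(Θ 0 1 * Θ 0 2 / (Θ 0 1 ^ 2 + Θ 0 2 ^ 2)) * Θ 0 0)
    (T : ℝ) (hT : T = Θ 1 1 + Θ 2 2)
    (lam : ℝ → ℝ) (hlam : ContDiff ℝ (⊤ : ℕ∞) lam) (hlam0 : ∀ t, lam t ≠ 0)
    (μ : ℝ) (hμdef : μ = Real.sqrt (Θ 0 1 ^ 2 + Θ 0 2 ^ 2))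
    (y : ℝ → ℝ) (hy : ∀ t, y t = μ * Bfun lam t + Real.arctan (Θ 0 0 / μ))
    (I : Set ℝ) (h0I : (0:ℝ) ∈ I) (hI : I.OrdConnected)
    (hcos : ∀ t ∈ I, Real.cos (y t) ≠ 0)
    (eT : ℝ → Fin 3 → Module.Dual ℝ 𝔤)
    (heT0 : ∀ t, eT t 0 = e 0 + Bfun lam t • (T • e 0 - Θ 0 1 • e 1 - Θ 0 2 • e 2))
    (heT1 : ∀ t, eT t 1 =
      (-(Θ 0 1 / μ) * (T / μ + (1 + T * Bfun lam t) * Real.tan (y t))) • e 0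
      + (1 + Θ 0 1 ^ 2 * Bfun lam t / μ * Real.tan (y t)) • e 1
      + (Θ 0 1 * Θ 0 2 * Bfun lam t / μ * Real.tan (y t)) • e 2)
    (heT2 : ∀ t, eT t 2 =
      (-(Θ 0 2 / μ) * (T / μ + (1 + T * Bfun lam t) * Real.tan (y t))) • e 0
      + (Θ 0 1 * Θ 0 2 * Bfun lam t / μ * Real.tan (y t)) • e 1
      + (1 + Θ 0 2 ^ 2 * Bfun lam t / μ * Real.tan (y t)) • e 2)
    (Θfam : ℝ → Matrix (Fin 3) (Fin 3) ℝ)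
    (hΘfam : ∀ t, Θfam t =
      !![μ * Real.tan (y t), Θ 0 1, Θ 0 2;
         Θ 0 1, -(Θ 0 1 ^ 2 / μ * Real.tan (y t)), -(Θ 0 1 * Θ 0 2 / μ * Real.tan (y t));
         Θ 0 2, -(Θ 0 1 * Θ 0 2 / μ * Real.tan (y t)), -(Θ 0 2 ^ 2 / μ * Real.tan (y t))]) :
    (∀ t ∈ I, F1At lam Θfam eT t ∧ F2At Θfam eT t ∧ F3At Θfam eT t ∧ F4At Θfam eT t) ∧
    eT 0 = e := by
  obtain ⟨-, hsymm, hconstr⟩ := hCauchy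
  have hp : Θ 0 1 ≠ 0 := left_ne_zero_of_mul hgen
  have hq : Θ 0 2 ≠ 0 := right_ne_zero_of_mul hgen
  have hKpos : (0:ℝ) < Θ 0 1 ^ 2 + Θ 0 2 ^ 2 := by positivity
  have hKne : Θ 0 1 ^ 2 + Θ 0 2 ^ 2 ≠ 0 := ne_of_gt hKpos
  have hμ2 : μ ^ 2 = Θ 0 1 ^ 2 + Θ 0 2 ^ 2 := by
    rw [hμdef]; exact Real.sq_sqrt hKpos.le
  have hμpos : 0 < μ := by rw [hμdef]; exact Real.sqrt_pos.mpr hKpos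
  have hμne : μ ≠ 0 := ne_of_gt hμpos
  set D : ℝ := Θ 0 0 / (Θ 0 1 ^ 2 + Θ 0 2 ^ 2) with hDdef
  have ha : Θ 0 0 = (Θ 0 1 ^ 2 + Θ 0 2 ^ 2) * D := by rw [hDdef]; field_simp
  have h12 : Θ 1 2 = -(Θ 0 1 * Θ 0 2 * D) := by rw [hln, hDdef]; field_simp
  have h11 : Θ 1 1 = -(Θ 0 1 ^ 2 * D) := by rw [hll, h12]; field_simp
  have h22 : Θ 2 2 = -(Θ 0 2 ^ 2 * D) := by rw [hnn, h12]; field_simp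
  have hTv : T = -((Θ 0 1 ^ 2 + Θ 0 2 ^ 2) * D) := by rw [hT, h11, h22]; ring
  have h10 : Θ 1 0 = Θ 0 1 := hsymm.apply 0 1
  have h20 : Θ 2 0 = Θ 0 2 := hsymm.apply 0 2
  have h21 : Θ 2 1 = Θ 1 2 := hsymm.apply 1 2
  set B : ℝ → ℝ := Bfun lam with hBdef
  set c : ℝ → ℝ := fun s => Real.tan (y s) / μ with hcdef
  have htan : ∀ s, Real.tan (y s) = μ * c s := by intro s; rw [hcdef]; field_simp
  have hB0 : B 0 = 0 := intervalIntegral.integral_same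
  have hB' : ∀ s, HasDerivAt B (lam s) s := by
    intro s
    exact intervalIntegral.integral_hasDerivAt_right
      (hlam.continuous.intervalIntegrable _ _)
      (hlam.continuous.stronglyMeasurableAtFilter _ _)
      hlam.continuous.continuousAt
  have hy' : ∀ s, HasDerivAt y (μ * lam s) s := by
    intro s
    have hyf : y = fun u => μ * B u + Real.arctan (Θ 0 0 / μ) := funext hy
    rw [hyf]
    simpa using ((hB' s).const_mul μ).add_const (Real.arctan (Θ 0 0 / μ))
  have hc' : ∀ t ∈ I, HasDerivAt c (lam t * (1 + (Θ 0 1 ^ 2 + Θ 0 2 ^ 2) * c t ^ 2)) t := by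
    intro t ht
    have h1 : HasDerivAt (fun s => Real.tan (y s)) (1 / Real.cos (y t) ^ 2 * (μ * lam t)) t :=
      (Real.hasDerivAt_tan (hcos t ht)).comp t (hy' t)
    have h2 := h1.div_const μ
    have hfun : c = fun s => Real.tan (y s) / μ := hcdef
    rw [hfun]
    convert h2 using 1
    · rfl
    · rfl
    have hcc : 1 / Real.cos (y t) ^ 2 = 1 + Real.tan (y t) ^ 2 := by
      rw [← Real.inv_one_add_tan_sq (hcos t ht)]
      field_simp
    have hval : 1 / Real.cos (y t) ^ 2 * (μ * lam t) / μ = (1 + Real.tan (y t) ^ 2) * lam t := by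
      rw [hcc]
      field_simp [hμne, hcos t ht]
    rw [hval, htan t, ← hμ2]
    ring
  have hA0 : ∀ (s : ℝ) (X : 𝔤), eT s 0 X =
      (1 - (Θ 0 1 ^ 2 + Θ 0 2 ^ 2) * D * B s) * e 0 X
      - Θ 0 1 * B s * e 1 X - Θ 0 2 * B s * e 2 X := by
    intro s X
    rw [heT0 s]
    simp only [LinearMap.add_apply, LinearMap.sub_apply, LinearMap.smul_apply, smul_eq_mul]
    rw [hTv]; ring
  have hA1 : ∀ (s : ℝ) (X : 𝔤), eT s 1 X =
      (Θ 0 1 * D - Θ 0 1 * (1 - (Θ 0 1 ^ 2 + Θ 0 2 ^ 2) * D * B s) * c s) * e 0 X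
      + (1 + Θ 0 1 ^ 2 * B s * c s) * e 1 X + (Θ 0 1 * Θ 0 2 * B s * c s) * e 2 X := by
    intro s X
    rw [heT1 s]
    simp only [LinearMap.add_apply, LinearMap.smul_apply, smul_eq_mul]
    rw [hTv, htan s, ← hμ2]
    field_simp
    ring
  have hA2 : ∀ (s : ℝ) (X : 𝔤), eT s 2 X =
      (Θ 0 2 * D - Θ 0 2 * (1 - (Θ 0 1 ^ 2 + Θ 0 2 ^ 2) * D * B s) * c s) * e 0 X
      + (Θ 0 1 * Θ 0 2 * B s * c s) * e 1 X + (1 + Θ 0 2 ^ 2 * B s * c s) * e 2 X := by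
    intro s X
    rw [heT2 s]
    simp only [LinearMap.add_apply, LinearMap.smul_apply, smul_eq_mul]
    rw [hTv, htan s, ← hμ2]
    field_simp
    ring
  have hdiv : ∀ (r s : ℝ), r / μ * Real.tan (y s) = r * c s := by
    intro r s
    rw [htan s]
    field_simp
  have hTh : ∀ s, Θfam s =
      !![(Θ 0 1 ^ 2 + Θ 0 2 ^ 2) * c s, Θ 0 1, Θ 0 2;
         Θ 0 1, -(Θ 0 1 ^ 2 * c s), -(Θ 0 1 * Θ 0 2 * c s);
         Θ 0 2, -(Θ 0 1 * Θ 0 2 * c s), -(Θ 0 2 ^ 2 * c s)] := by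
    intro s
    rw [hΘfam s]
    have e00 : μ * Real.tan (y s) = (Θ 0 1 ^ 2 + Θ 0 2 ^ 2) * c s := by
      rw [htan s, ← hμ2]; ring
    rw [e00, hdiv (Θ 0 1 ^ 2) s, hdiv (Θ 0 1 * Θ 0 2) s, hdiv (Θ 0 2 ^ 2) s]
  have hz0 : ∀ X Y : 𝔤, e 0 ⁅X, Y⁆ =
      -((Θ 0 1 ^ 2 + Θ 0 2 ^ 2) * D * (e 0 X * e 0 Y - e 0 Y * e 0 X)
        + Θ 0 1 * (e 1 X * e 0 Y - e 1 Y * e 0 X)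
        + Θ 0 2 * (e 2 X * e 0 Y - e 2 Y * e 0 X)) := by
    intro X Y
    have h := hconstr 0 X Y
    rw [Fin.sum_univ_three, ha] at h
    linear_combination -h
  have hz1 : ∀ X Y : 𝔤, e 1 ⁅X, Y⁆ =
      -(Θ 0 1 * (e 0 X * e 0 Y - e 0 Y * e 0 X)
        + -(Θ 0 1 ^ 2 * D) * (e 1 X * e 0 Y - e 1 Y * e 0 X)
        + -(Θ 0 1 * Θ 0 2 * D) * (e 2 X * e 0 Y - e 2 Y * e 0 X)) := by
    intro X Y
    have h := hconstr 1 X Y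
    rw [Fin.sum_univ_three, h10, h11, h12] at h
    linear_combination -h
  have hz2 : ∀ X Y : 𝔤, e 2 ⁅X, Y⁆ =
      -(Θ 0 2 * (e 0 X * e 0 Y - e 0 Y * e 0 X)
        + -(Θ 0 1 * Θ 0 2 * D) * (e 1 X * e 0 Y - e 1 Y * e 0 X)
        + -(Θ 0 2 ^ 2 * D) * (e 2 X * e 0 Y - e 2 Y * e 0 X)) := by
    intro X Y
    have h := hconstr 2 X Y
    rw [Fin.sum_univ_three, h20, h21, h12, h22] at h
    linear_combination -h
  have mset : True := trivial
  refine ⟨fun t ht => ⟨?_, ?_, ?_, ?_⟩, ?_⟩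
  · -- F1
    intro a X
    fin_cases a
    · -- a = 0
      show HasDerivAt (fun s => eT s 0 X) (-(lam t * ∑ b, Θfam t 0 b * eT t b X)) t
      have d0 := ((((((hB' t).const_mul ((Θ 0 1 ^ 2 + Θ 0 2 ^ 2) * D)).const_sub 1).mul_const
          (e 0 X)).sub (((hB' t).const_mul (Θ 0 1)).mul_const (e 1 X))).sub
          (((hB' t).const_mul (Θ 0 2)).mul_const (e 2 X)))
      convert d0 using 1
      · rfl
      · rfl
      · funext s
        rw [hA0 s X]
        simp only [Pi.add_apply, Pi.sub_apply, Pi.mul_apply]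
        try ring
      · rw [hTh t]
        simp [Fin.sum_univ_three, Matrix.cons_val_zero, Matrix.cons_val_one, Matrix.head_cons,
          Matrix.cons_val_two, Matrix.tail_cons, Matrix.head_fin_const]
        rw [hA0 t X, hA1 t X, hA2 t X]
        ring
    · -- a = 1
      show HasDerivAt (fun s => eT s 1 X) (-(lam t * ∑ b, Θfam t 1 b * eT t b X)) t
      have d0 := (((((((hB' t).const_mul ((Θ 0 1 ^ 2 + Θ 0 2 ^ 2) * D)).const_sub 1).const_mul
          (Θ 0 1)).mul (hc' t ht)).const_sub (Θ 0 1 * D)).mul_const (e 0 X)).add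
          (((((hB' t).mul (hc' t ht)).const_mul (Θ 0 1 ^ 2)).const_add 1).mul_const (e 1 X))
          |>.add ((((hB' t).mul (hc' t ht)).const_mul (Θ 0 1 * Θ 0 2)).mul_const (e 2 X))
      convert d0 using 1
      · rfl
      · rfl
      · funext s
        rw [hA1 s X]
        simp only [Pi.add_apply, Pi.sub_apply, Pi.mul_apply]
        try ring
      · rw [hTh t]
        simp [Fin.sum_univ_three, Matrix.cons_val_zero, Matrix.cons_val_one, Matrix.head_cons,
          Matrix.cons_val_two, Matrix.tail_cons, Matrix.head_fin_const]
        rw [hA0 t X, hA1 t X, hA2 t X]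
        ring
    · -- a = 2
      show HasDerivAt (fun s => eT s 2 X) (-(lam t * ∑ b, Θfam t 2 b * eT t b X)) t
      have d0 := (((((((hB' t).const_mul ((Θ 0 1 ^ 2 + Θ 0 2 ^ 2) * D)).const_sub 1).const_mul
          (Θ 0 2)).mul (hc' t ht)).const_sub (Θ 0 2 * D)).mul_const (e 0 X)).add
          (((((hB' t).mul (hc' t ht)).const_mul (Θ 0 1 * Θ 0 2)).mul_const (e 1 X)))
          |>.add (((((hB' t).mul (hc' t ht)).const_mul (Θ 0 2 ^ 2)).const_add 1).mul_const (e 2 X))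
      convert d0 using 1
      · rfl
      · rfl
      · funext s
        rw [hA2 s X]
        simp only [Pi.add_apply, Pi.sub_apply, Pi.mul_apply]
        try ring
      · rw [hTh t]
        simp [Fin.sum_univ_three, Matrix.cons_val_zero, Matrix.cons_val_one, Matrix.head_cons,
          Matrix.cons_val_two, Matrix.tail_cons, Matrix.head_fin_const]
        rw [hA0 t X, hA1 t X, hA2 t X]
        ring
  · -- F2
    intro a X Y
    have key : ∀ aa : Fin 3, -(eT t aa ⁅X, Y⁆) =
        ∑ b, Θfam t aa b * (eT t b X * eT t 0 Y - eT t b Y * eT t 0 X) := by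
      intro aa
      fin_cases aa
      · show -(eT t 0 ⁅X, Y⁆) = ∑ b, Θfam t 0 b * (eT t b X * eT t 0 Y - eT t b Y * eT t 0 X)
        rw [hTh t]
        simp only [Fin.sum_univ_three, Matrix.cons_val_zero, Matrix.cons_val_one, Matrix.head_cons,
          Matrix.cons_val_two, Matrix.tail_cons, Matrix.head_fin_const, Matrix.cons_val',
          Matrix.of_apply, Matrix.empty_val', Matrix.cons_val_fin_one]
        simp only [hA0 t X, hA0 t Y, hA0 t ⁅X, Y⁆, hA1 t X, hA1 t Y, hA1 t ⁅X, Y⁆,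
          hA2 t X, hA2 t Y, hA2 t ⁅X, Y⁆, hz0 X Y, hz1 X Y, hz2 X Y]
        ring
      · show -(eT t 1 ⁅X, Y⁆) = ∑ b, Θfam t 1 b * (eT t b X * eT t 0 Y - eT t b Y * eT t 0 X)
        rw [hTh t]
        simp only [Fin.sum_univ_three, Matrix.cons_val_zero, Matrix.cons_val_one, Matrix.head_cons,
          Matrix.cons_val_two, Matrix.tail_cons, Matrix.head_fin_const, Matrix.cons_val',
          Matrix.of_apply, Matrix.empty_val', Matrix.cons_val_fin_one]
        simp only [hA0 t X, hA0 t Y, hA0 t ⁅X, Y⁆, hA1 t X, hA1 t Y, hA1 t ⁅X, Y⁆,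
          hA2 t X, hA2 t Y, hA2 t ⁅X, Y⁆, hz0 X Y, hz1 X Y, hz2 X Y]
        ring
      · show -(eT t 2 ⁅X, Y⁆) = ∑ b, Θfam t 2 b * (eT t b X * eT t 0 Y - eT t b Y * eT t 0 X)
        rw [hTh t]
        simp only [Fin.sum_univ_three, Matrix.cons_val_zero, Matrix.cons_val_one, Matrix.head_cons,
          Matrix.cons_val_two, Matrix.tail_cons, Matrix.head_fin_const, Matrix.cons_val',
          Matrix.of_apply, Matrix.empty_val', Matrix.cons_val_fin_one]
        simp only [hA0 t X, hA0 t Y, hA0 t ⁅X, Y⁆, hA1 t X, hA1 t Y, hA1 t ⁅X, Y⁆,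
          hA2 t X, hA2 t Y, hA2 t ⁅X, Y⁆, hz0 X Y, hz1 X Y, hz2 X Y]
        ring
    exact key a
  · -- F3
    intro X
    have E : (fun s => ∑ a, Θfam s 0 a * eT s a X) =
        fun _ => (Θ 0 1 ^ 2 + Θ 0 2 ^ 2) * D * e 0 X + Θ 0 1 * e 1 X + Θ 0 2 * e 2 X := by
      funext s
      rw [hTh s]
      simp only [Fin.sum_univ_three, Matrix.cons_val_zero, Matrix.cons_val_one, Matrix.head_cons,
        Matrix.cons_val_two, Matrix.tail_cons, Matrix.head_fin_const, Matrix.cons_val',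
        Matrix.of_apply, Matrix.empty_val', Matrix.cons_val_fin_one]
      rw [hA0 s X, hA1 s X, hA2 s X]
      ring
    rw [E]
    exact hasDerivAt_const t _
  · -- F4
    intro X Y
    rw [hTh t]
    simp only [Fin.sum_univ_three, Matrix.cons_val_zero, Matrix.cons_val_one, Matrix.head_cons,
      Matrix.cons_val_two, Matrix.tail_cons, Matrix.head_fin_const, Matrix.cons_val',
      Matrix.of_apply, Matrix.empty_val', Matrix.cons_val_fin_one]
    simp only [hA0 t ⁅X, Y⁆, hA1 t ⁅X, Y⁆, hA2 t ⁅X, Y⁆, hz0 X Y, hz1 X Y, hz2 X Y]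
    ring
  · -- initial condition
    funext a
    fin_cases a
    · show eT 0 0 = e 0
      rw [heT0 0, hB0]
      simp
    · show eT 0 1 = e 1
      have hy0 : Real.tan (y 0) = Θ 0 0 / μ := by
        rw [hy 0, hB0]
        simp [Real.tan_arctan]
      have c0 : -(Θ 0 1 / μ) * (T / μ + (1 + T * B 0) * Real.tan (y 0)) = 0 := by
        rw [hB0, hy0, hTv, ha]
        ring
      have c1 : 1 + Θ 0 1 ^ 2 * B 0 / μ * Real.tan (y 0) = 1 := by rw [hB0]; ring
      have c2 : Θ 0 1 * Θ 0 2 * B 0 / μ * Real.tan (y 0) = 0 := by rw [hB0]; ring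
      rw [heT1 0, c0, c1, c2]
      simp
    · show eT 0 2 = e 2
      have hy0 : Real.tan (y 0) = Θ 0 0 / μ := by
        rw [hy 0, hB0]
        simp [Real.tan_arctan]
      have c0 : -(Θ 0 2 / μ) * (T / μ + (1 + T * B 0) * Real.tan (y 0)) = 0 := by
        rw [hB0, hy0, hTv, ha]
        ring
      have c1 : Θ 0 1 * Θ 0 2 * B 0 / μ * Real.tan (y 0) = 0 := by rw [hB0]; ring
      have c2 : 1 + Θ 0 2 ^ 2 * B 0 / μ * Real.tan (y 0) = 1 := by rw [hB0]; ring
      rw [heT2 0, c0, c1, c2]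
      simp
end
end

section
/- Let 𝔤 be a 3-dimensional real Lie algebra, let λ : I → ℝ be differentiable and nowhere zero on an interval I, let t ↦ Θ^t_{ab} be a differentiable family of symmetric real 3×3 matrices satisfying the integrability conditions on I, and let e^t be a family of left-invariant coframes satisfying the flow equation (F1): ∂_t e^t_a(X) + λ_t Σ_b Θ^t_{ab} e^t_b(X) = 0 for all a ∈ {u,l,n} and X ∈ 𝔤. For each a define the family of alternating 2-forms 𝔴^t_a(X,Y) := −e^t_a([X,Y]) − Σ_b Θ^t_{ab} (e^t_b(X) e^t_u(Y) − e^t_b(Y) e^t_u(X)). Then for all t ∈ I, all a, and all X, Y ∈ 𝔤: ∂_t 𝔴^t_a(X,Y) = −λ_t Σ_d Θ^t_{ad} 𝔴^t_d(X,Y). In particular, if 𝔴^0_a = 0 for all a, then 𝔴^t_a = 0 for all t ∈ I, i.e. the constraint (F2) propagates along the flow. -/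
noncomputable section

variable {𝔤 : Type*} [LieRing 𝔤] [LieAlgebra ℝ 𝔤]

/-- The obstruction two-forms `𝔴^t_a(X,Y)` measuring the failure of constraint (F2). -/
def wform (Θ : ℝ → Matrix (Fin 3) (Fin 3) ℝ) (e : ℝ → Fin 3 → Module.Dual ℝ 𝔤)
    (s : ℝ) (a : Fin 3) (X Y : 𝔤) : ℝ :=
  -(e s a ⁅X, Y⁆) - ∑ b, Θ s a b * (e s b X * e s 0 Y - e s b Y * e s 0 X)

/-- Grönwall: a function with `f 0 = 0` whose derivative is linearly bounded vanishes. -/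
lemma gronwall_zero_aux {E : Type*} [NormedAddCommGroup E] [NormedSpace ℝ E]
    {f f' : ℝ → E} {T K : ℝ}
    (hd : ∀ s ∈ Set.Icc (0:ℝ) T, HasDerivAt f (f' s) s)
    (hb : ∀ s ∈ Set.Icc (0:ℝ) T, ‖f' s‖ ≤ K * ‖f s‖)
    (h0 : f 0 = 0) : ∀ s ∈ Set.Icc (0:ℝ) T, f s = 0 := by
  intro s hs
  have hcont : ContinuousOn f (Set.Icc 0 T) := fun x hx =>
    (hd x hx).continuousAt.continuousWithinAt
  have H := norm_le_gronwallBound_of_norm_deriv_right_le (f' := f') (δ := 0) (K := K) (ε := 0)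
    hcont (fun x hx => (hd x (Set.Ico_subset_Icc_self hx)).hasDerivWithinAt)
    (by simp [h0])
    (fun x hx => by simpa using hb x (Set.Ico_subset_Icc_self hx))
  have h2 := H s hs
  rw [gronwallBound_ε0_δ0] at h2
  exact norm_le_zero_iff.1 h2

/-- Propagation of the constraint (F2) along the flow (F1): the obstruction forms `𝔴^t_a`
satisfy the linear ODE `∂ₜ 𝔴^t_a = −λ_t Σ_d Θ^t_{ad} 𝔴^t_d`; in particular if they vanish at
`t = 0` they vanish on all of `I`. -/
theorem constraint_propagation
    {𝔤 : Type*} [LieRing 𝔤] [LieAlgebra ℝ 𝔤]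
    (hdim : Module.finrank ℝ 𝔤 = 3)
    (I : Set ℝ) (h0I : (0:ℝ) ∈ I) (hI : I.OrdConnected)
    (lam : ℝ → ℝ) (hlamdiff : ∀ t ∈ I, DifferentiableAt ℝ lam t)
    (hlam0 : ∀ t ∈ I, lam t ≠ 0)
    (Θ : ℝ → Matrix (Fin 3) (Fin 3) ℝ)
    (hΘsymm : ∀ t, (Θ t).IsSymm)
    (hΘdiff : ∀ a b : Fin 3, ∀ t ∈ I, DifferentiableAt ℝ (fun s => Θ s a b) t)
    (hint : ∀ t ∈ I, IntegrabilityAt lam Θ t)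
    (e : ℝ → Fin 3 → Module.Dual ℝ 𝔤)
    (hcof : ∀ t, IsCoframe (e t))
    (hF1 : ∀ t ∈ I, F1At lam Θ e t) :
    (∀ t ∈ I, ∀ (a : Fin 3) (X Y : 𝔤),
      HasDerivAt (fun s => wform Θ e s a X Y)
        (-(lam t * ∑ d, Θ t a d * wform Θ e t d X Y)) t) ∧
    ((∀ (a : Fin 3) (X Y : 𝔤), wform Θ e 0 a X Y = 0) →
      ∀ t ∈ I, ∀ (a : Fin 3) (X Y : 𝔤), wform Θ e t a X Y = 0) := by
  have hODE : ∀ t ∈ I, ∀ (a : Fin 3) (X Y : 𝔤),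
      HasDerivAt (fun s => wform Θ e s a X Y)
        (-(lam t * ∑ d, Θ t a d * wform Θ e t d X Y)) t := by
    intro t ht a X Y
    obtain ⟨h1, h2, h3, h4, h5, h6, h7, h8, -, -⟩ := hint t ht
    have hE := hF1 t ht
    have hΘd : ∀ i j : Fin 3, HasDerivAt (fun s => Θ s i j) (deriv (fun s => Θ s i j) t) t :=
      fun i j => (hΘdiff i j t ht).hasDerivAt
    have hmain := ((hE a ⁅X, Y⁆).neg).sub
      (HasDerivAt.sum (u := Finset.univ) (fun b _ => ((hΘd a b).mul
        (((hE b X).mul (hE 0 Y)).sub ((hE b Y).mul (hE 0 X))))))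
    have s10 : (fun s => Θ s 1 0) = fun s => Θ s 0 1 := funext fun s => (hΘsymm s).apply 0 1
    have s20 : (fun s => Θ s 2 0) = fun s => Θ s 0 2 := funext fun s => (hΘsymm s).apply 0 2
    have s21 : (fun s => Θ s 2 1) = fun s => Θ s 1 2 := funext fun s => (hΘsymm s).apply 1 2
    have e10 : Θ t 1 0 = Θ t 0 1 := (hΘsymm t).apply 0 1
    have e20 : Θ t 2 0 = Θ t 0 2 := (hΘsymm t).apply 0 2
    have e21 : Θ t 2 1 = Θ t 1 2 := (hΘsymm t).apply 1 2
    simp only [wform]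
    convert hmain using 1
    case e'_8 => funext s; simp only [Pi.sub_apply, Pi.neg_apply, Finset.sum_apply, Pi.mul_apply]
    any_goals rfl
    fin_cases a
    · simp only [Fin.zero_eta, Fin.mk_one, Fin.reduceFinMk, Fin.isValue, Fin.sum_univ_three,
        Pi.sub_apply, Pi.mul_apply]
      rw [h1, h2, h3]
      ring
    · simp only [Fin.zero_eta, Fin.mk_one, Fin.reduceFinMk, Fin.isValue, Fin.sum_univ_three,
        Pi.sub_apply, Pi.mul_apply]
      rw [s10, h2, h4, h5, e10, e20, e21]
      linear_combination (lam t * (e t 1 X * e t 2 Y - e t 1 Y * e t 2 X)) * h7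
    · simp only [Fin.zero_eta, Fin.mk_one, Fin.reduceFinMk, Fin.isValue, Fin.sum_univ_three,
        Pi.sub_apply, Pi.mul_apply]
      rw [s20, s21, h3, h5, h6, e10, e20, e21]
      linear_combination (-(lam t * (e t 1 X * e t 2 Y - e t 1 Y * e t 2 X))) * h8
  refine ⟨hODE, ?_⟩
  intro h0 t ht a X Y
  classical
  set W : ℝ → Fin 3 → ℝ := fun s c => wform Θ e s c X Y with hWdef
  have hWd : ∀ s ∈ I, HasDerivAt W (fun c => -(lam s * ∑ d, Θ s c d * W s d)) s :=
    fun s hs => hasDerivAt_pi.2 fun c => hODE s hs c X Y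
  have hW0 : W 0 = 0 := funext fun c => h0 c X Y
  set C : ℝ → ℝ := fun s => |lam s| * ∑ c : Fin 3, ∑ d : Fin 3, |Θ s c d| with hCdef
  have hCb : ∀ (s : ℝ) (w : Fin 3 → ℝ),
      ‖(fun c => -(lam s * ∑ d, Θ s c d * w d) : Fin 3 → ℝ)‖ ≤ C s * ‖w‖ := by
    intro s w
    rw [pi_norm_le_iff_of_nonneg (by positivity)]
    intro c
    have h1 : ‖-(lam s * ∑ d, Θ s c d * w d)‖ = |lam s| * |∑ d, Θ s c d * w d| := by
      rw [norm_neg, Real.norm_eq_abs, abs_mul]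
    rw [h1]
    have h2 : |∑ d, Θ s c d * w d| ≤ ∑ d : Fin 3, |Θ s c d| * ‖w‖ := by
      refine (Finset.abs_sum_le_sum_abs _ _).trans (Finset.sum_le_sum fun d _ => ?_)
      rw [abs_mul]
      exact mul_le_mul_of_nonneg_left (by simpa using norm_le_pi_norm w d) (abs_nonneg _)
    calc |lam s| * |∑ d, Θ s c d * w d|
        ≤ |lam s| * (∑ d : Fin 3, |Θ s c d| * ‖w‖) :=
          mul_le_mul_of_nonneg_left h2 (abs_nonneg _)
      _ = |lam s| * (∑ d : Fin 3, |Θ s c d|) * ‖w‖ := by rw [← Finset.sum_mul]; ring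
      _ ≤ C s * ‖w‖ := by
          refine mul_le_mul_of_nonneg_right ?_ (norm_nonneg _)
          refine mul_le_mul_of_nonneg_left ?_ (abs_nonneg _)
          exact Finset.single_le_sum (f := fun c' => ∑ d : Fin 3, |Θ s c' d|)
            (fun i _ => by positivity) (Finset.mem_univ c)
  have hCc : ∀ s ∈ I, ContinuousAt C s := by
    intro s hs
    have hl : ContinuousAt (fun r => |lam r|) s := (hlamdiff s hs).continuousAt.abs
    have hT : ∀ c d : Fin 3, ContinuousAt (fun r => |Θ r c d|) s :=
      fun c d => (hΘdiff c d s hs).continuousAt.abs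
    have hsum : ContinuousAt (fun r => ∑ c : Fin 3, ∑ d : Fin 3, |Θ r c d|) s := by
      simp only [Fin.sum_univ_three]
      exact ((((hT 0 0).add (hT 0 1)).add (hT 0 2)).add
        (((hT 1 0).add (hT 1 1)).add (hT 1 2))).add
        (((hT 2 0).add (hT 2 1)).add (hT 2 2))
    exact hl.mul hsum
  rcases le_total 0 t with h0t | ht0
  · have hsub : Set.Icc (0:ℝ) t ⊆ I := hI.out h0I ht
    obtain ⟨u, hu, hK⟩ := isCompact_Icc.exists_isMaxOn ⟨0, Set.left_mem_Icc.2 h0t⟩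
      (fun s hs => (hCc s (hsub hs)).continuousWithinAt)
    have key := gronwall_zero_aux (f := W)
      (f' := fun s => fun c => -(lam s * ∑ d, Θ s c d * W s d)) (T := t) (K := C u)
      (fun s hs => hWd s (hsub hs))
      (fun s hs => (hCb s (W s)).trans
        (mul_le_mul_of_nonneg_right (hK hs) (norm_nonneg _)))
      hW0
    exact congrFun (key t (Set.right_mem_Icc.2 h0t)) a
  · have hsub : Set.Icc t (0:ℝ) ⊆ I := hI.out ht h0I
    obtain ⟨u, hu, hK⟩ := isCompact_Icc.exists_isMaxOn ⟨t, Set.left_mem_Icc.2 ht0⟩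
      (fun s hs => (hCc s (hsub hs)).continuousWithinAt)
    have hVd : ∀ s ∈ Set.Icc (0:ℝ) (-t), HasDerivAt (fun r => W (-r))
        ((-1 : ℝ) • (fun c => -(lam (-s) * ∑ d, Θ (-s) c d * W (-s) d))) s := by
      intro s hs
      have hmem : -s ∈ I := hsub ⟨by linarith [hs.2], by linarith [hs.1]⟩
      have := (hWd (-s) hmem).scomp s (hasDerivAt_neg s)
      exact this
    have hbV : ∀ s ∈ Set.Icc (0:ℝ) (-t),
        ‖(-1 : ℝ) • (fun c => -(lam (-s) * ∑ d, Θ (-s) c d * W (-s) d) : Fin 3 → ℝ)‖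
          ≤ C u * ‖W (-s)‖ := by
      intro s hs
      have hmem : -s ∈ Set.Icc t (0:ℝ) := ⟨by linarith [hs.2], by linarith [hs.1]⟩
      calc ‖(-1 : ℝ) • (fun c => -(lam (-s) * ∑ d, Θ (-s) c d * W (-s) d) : Fin 3 → ℝ)‖
          = ‖(fun c => -(lam (-s) * ∑ d, Θ (-s) c d * W (-s) d) : Fin 3 → ℝ)‖ := by
            rw [norm_smul]; simp
        _ ≤ C (-s) * ‖W (-s)‖ := hCb (-s) (W (-s))
        _ ≤ C u * ‖W (-s)‖ :=
            mul_le_mul_of_nonneg_right (hK hmem) (norm_nonneg _)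
    have hV0 : W (-(0:ℝ)) = 0 := by rw [neg_zero]; exact hW0
    have key := gronwall_zero_aux (f := fun r => W (-r))
      (f' := fun s => (-1 : ℝ) • (fun c => -(lam (-s) * ∑ d, Θ (-s) c d * W (-s) d)))
      (T := -t) (K := C u) hVd hbV hV0
    have := key (-t) (Set.right_mem_Icc.2 (by linarith))
    simp only [neg_neg] at this
    exact congrFun this a
end
end

section
/- Let 𝔤 be a 3-dimensional real Lie algebra, e^t a family of left-invariant coframes on an interval I, λ : I → ℝ nowhere zero, and t ↦ Θ^t_{ab} a differentiable family of symmetric real 3×3 matrices. (a) If the flow equation (F1) ∂_t e^t_a(X) = −λ_t Σ_b Θ^t_{ab} e^t_b(X) holds for all a and X, then equation (F3) ∂_t (Σ_a Θ^t_{ua} e^t_a(X)) = 0 for all X holds at time t if and only if ∂_t Θ^t_{ub} = λ_t Σ_a Θ^t_{ua} Θ^t_{ab} for every b ∈ {u,l,n}. (b) If the constraint (F2) −e^t_a([X,Y]) = Σ_b Θ^t_{ab} (e^t_b(X) e^t_u(Y) − e^t_b(Y) e^t_u(X)) holds for all a, X, Y, then equation (F4) Σ_a Θ^t_{ua} e^t_a([X,Y])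 = 0 for all X, Y holds at time t if and only if Σ_a Θ^t_{ua} Θ^t_{al} = 0 and Σ_a Θ^t_{ua} Θ^t_{an} = 0. -/
noncomputable section

variable {𝔤 : Type*} [LieRing 𝔤] [LieAlgebra ℝ 𝔤]

/-- (a) Along the flow (F1), equation (F3) holds at time `t` iff
`∂ₜ Θ^t_{ub} = λ_t Σ_a Θ^t_{ua} Θ^t_{ab}` for all `b`.
(b) Given the constraint (F2), equation (F4) holds at time `t` iff
`Σ_a Θ^t_{ua} Θ^t_{al} = 0` and `Σ_a Θ^t_{ua} Θ^t_{an} = 0`. -/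
theorem F3_F4_characterization
    {𝔤 : Type*} [LieRing 𝔤] [LieAlgebra ℝ 𝔤]
    (hdim : Module.finrank ℝ 𝔤 = 3)
    (I : Set ℝ)
    (lam : ℝ → ℝ) (hlam0 : ∀ t ∈ I, lam t ≠ 0)
    (e : ℝ → Fin 3 → Module.Dual ℝ 𝔤)
    (hcof : ∀ t, IsCoframe (e t))
    (hediff : ∀ (a : Fin 3) (X : 𝔤), ∀ t ∈ I, DifferentiableAt ℝ (fun s => e s a X) t)
    (Θ : ℝ → Matrix (Fin 3) (Fin 3) ℝ)
    (hΘsymm : ∀ t, (Θ t).IsSymm)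
    (hΘdiff : ∀ a b : Fin 3, ∀ t ∈ I, DifferentiableAt ℝ (fun s => Θ s a b) t)
    (t : ℝ) (ht : t ∈ I) :
    (F1At lam Θ e t →
      (F3At Θ e t ↔
        ∀ b : Fin 3, deriv (fun s => Θ s 0 b) t = lam t * ∑ a, Θ t 0 a * Θ t a b)) ∧
    (F2At Θ e t →
      (F4At Θ e t ↔
        ((∑ a, Θ t 0 a * Θ t a 1 = 0) ∧ (∑ a, Θ t 0 a * Θ t a 2 = 0)))) := by

  classical
  have hfd : FiniteDimensional ℝ 𝔤 := Module.finite_of_finrank_pos (by omega)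
  obtain ⟨hli, hsp⟩ := hcof t
  set B : Module.Basis (Fin 3) ℝ (Module.Dual ℝ 𝔤) := Module.Basis.mk hli (le_of_eq hsp.symm) with hBdef
  have hBe : ∀ i, B i = e t i := fun i => Module.Basis.mk_apply _ _ i
  set V : Fin 3 → 𝔤 := fun i => (Module.evalEquiv ℝ 𝔤).symm (B.dualBasis i) with hVdef
  have hVe : ∀ i j, e t j (V i) = if j = i then 1 else 0 := by
    intro i j
    have h1 : e t j (V i) = Module.evalEquiv ℝ 𝔤 (V i) (e t j) := rfl
    rw [h1, hVdef, LinearEquiv.apply_symm_apply, ← hBe, Module.Basis.dualBasis_apply_self]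
  have key : ∀ c : Fin 3 → ℝ, (∀ Y : 𝔤, ∑ b, c b * e t b Y = 0) → ∀ b, c b = 0 := by
    intro c hc b
    have h := hc (V b)
    simpa [hVe, mul_ite, Finset.sum_ite_eq] using h
  constructor
  · intro hF1
    have hD : ∀ Y : 𝔤, HasDerivAt (fun s => ∑ a, Θ s 0 a * e s a Y)
        (∑ b, (deriv (fun s => Θ s 0 b) t - lam t * ∑ a, Θ t 0 a * Θ t a b) * e t b Y) t := by
      intro Y
      have h1 : HasDerivAt (fun s => ∑ a, Θ s 0 a * e s a Y)
          (∑ a, (deriv (fun s => Θ s 0 a) t * e t a Y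
            + Θ t 0 a * (-(lam t * ∑ b, Θ t a b * e t b Y)))) t :=
        HasDerivAt.fun_sum fun a _ => ((hΘdiff 0 a t ht).hasDerivAt.mul (hF1 a Y))
      convert h1 using 1
      simp only [Fin.sum_univ_three]
      ring
    constructor
    · intro hF3 b
      have h0 : ∀ Y : 𝔤,
          ∑ b, (deriv (fun s => Θ s 0 b) t - lam t * ∑ a, Θ t 0 a * Θ t a b) * e t b Y = 0 :=
        fun Y => ((hD Y).unique (hF3 Y))
      have hz := key _ h0 b
      linarith [hz]
    · intro hcond Y
      have hz : (∑ b, (deriv (fun s => Θ s 0 b) t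
          - lam t * ∑ a, Θ t 0 a * Θ t a b) * e t b Y) = 0 :=
        Finset.sum_eq_zero fun b _ => by rw [hcond b, sub_self, zero_mul]
      exact hz ▸ hD Y
  · intro hF2
    have hneg : ∀ (a : Fin 3) (X Y : 𝔤),
        e t a ⁅X, Y⁆ = -(∑ b, Θ t a b * (e t b X * e t 0 Y - e t b Y * e t 0 X)) := by
      intro a X Y
      have h := hF2 a X Y
      linarith
    constructor
    · intro hF4
      constructor
      · have h := hF4 (V 1) (V 0)
        simp [hneg, hVe, Fin.sum_univ_three] at h
        simp only [Fin.sum_univ_three]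
        linarith
      · have h := hF4 (V 2) (V 0)
        simp [hneg, hVe, Fin.sum_univ_three] at h
        simp only [Fin.sum_univ_three]
        linarith
    · rintro ⟨h1, h2⟩ X Y
      simp only [Fin.sum_univ_three] at h1 h2 ⊢
      simp only [hneg, Fin.sum_univ_three]
      linear_combination
        (-(e t 1 X * e t 0 Y - e t 1 Y * e t 0 X)) * h1 +
        (-(e t 2 X * e t 0 Y - e t 2 Y * e t 0 X)) * h2
end
end
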